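/- arXiv:math/9912141 — 6 statements merged into one kernel-verified Lean document; each statement's English description precedes it below -/
import Mathlib

section
/- Let A be a commutative ring and n a positive integer. Let R = A[X_1, …, X_n] be the polynomial ring in n variables over A, and let Δ(Y) = ∏_{i=1}^n (Y - X_i) in R[Y]. For every polynomial f ∈ A[X], let μ(f) be the R-linear endomorphism of the free rank-n R-module R[Y]/(Δ(Y)) given by multiplication by the residue class of f(Y). Then the characteristic polynomial of μ(f) equals ∏_{i=1}^n (Z - f(X_i)). -/
open Polynomial

section Aux

variable {R : Type*} [CommRing R]

/-- The matrix of multiplication by `g` mod `Δ` in the power basis, written explicitly. -/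
noncomputable def modMat (m : ℕ) (Δ g : R[X]) : Matrix (Fin m) (Fin m) R :=
  fun i j => ((g * X ^ (j : ℕ)) %ₘ Δ).coeff i

lemma modMat_map {R' : Type*} [CommRing R'] (χ : R →+* R') (m : ℕ) {Δ : R[X]} (g : R[X])
    (hΔ : Δ.Monic) :
    (modMat m Δ g).map χ = modMat m (Δ.map χ) (g.map χ) := by
  ext i j
  show χ (((g * X ^ (j : ℕ)) %ₘ Δ).coeff i) = _
  rw [← Polynomial.coeff_map, Polynomial.map_modByMonic χ hΔ, Polynomial.map_mul,
    Polynomial.map_pow, Polynomial.map_X]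
  rfl

lemma toMatrix_mulLeft_modMat {Δ : R[X]} (hΔ : Δ.Monic) (g : R[X]) :
    LinearMap.toMatrix (AdjoinRoot.powerBasis' hΔ).basis (AdjoinRoot.powerBasis' hΔ).basis
        (LinearMap.mulLeft R (AdjoinRoot.mk Δ g))
      = modMat Δ.natDegree Δ g := by
  ext i j
  rw [LinearMap.toMatrix_apply]
  have hb : (AdjoinRoot.powerBasis' hΔ).basis j = AdjoinRoot.mk Δ (X ^ (j : ℕ)) := by
    rw [PowerBasis.basis_eq_pow, AdjoinRoot.powerBasis'_gen, ← AdjoinRoot.mk_X, ← map_pow]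
  rw [hb, LinearMap.mulLeft_apply, ← map_mul]
  show ((AdjoinRoot.powerBasisAux' hΔ).repr ((AdjoinRoot.mk Δ) (g * X ^ (j : ℕ)))) i = _
  erw [AdjoinRoot.powerBasisAux'_repr_apply_to_fun, AdjoinRoot.modByMonicHom_mk]
  rfl

lemma charpoly_diagonal {m : Type*} [Fintype m] [DecidableEq m] (d : m → R) :
    (Matrix.diagonal d).charpoly = ∏ i, (X - C (d i)) := by
  rw [Matrix.charpoly, Matrix.charmatrix, RingHom.mapMatrix_apply]
  have : (Matrix.scalar m (X : R[X])) - (Matrix.diagonal d).map C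
      = Matrix.diagonal fun i => (X : R[X]) - C (d i) := by
    rw [Matrix.scalar_apply, Matrix.diagonal_map (by simp), Matrix.diagonal_sub]
  rw [this, Matrix.det_diagonal]

lemma charpoly_modMat_field {K : Type*} [Field K] {m : ℕ} (x : Fin m → K)
    (hx : Function.Injective x) (g : K[X]) :
    (modMat m (∏ i, (X - C (x i))) g).charpoly = ∏ i, (X - C (g.eval (x i))) := by
  set Δ : K[X] := ∏ i, (X - C (x i)) with hΔdef
  have hΔ : Δ.Monic := monic_prod_of_monic _ _ fun i _ => monic_X_sub_C _
  have hdeg : Δ.natDegree = m := by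
    rw [hΔdef, natDegree_prod_of_monic _ _ fun i _ => monic_X_sub_C _]
    simp
  have hre : (Matrix.reindex (finCongr hdeg) (finCongr hdeg)
      (modMat Δ.natDegree Δ g)) = modMat m Δ g := by
    ext i j
    simp [modMat, Matrix.reindex_apply]
  haveI : Module.Finite K (AdjoinRoot Δ) :=
    Module.Finite.of_basis (AdjoinRoot.powerBasis' hΔ).basis
  rw [← hre, Matrix.charpoly_reindex, ← toMatrix_mulLeft_modMat hΔ g]
  erw [LinearMap.charpoly_toMatrix (LinearMap.mulLeft K (AdjoinRoot.mk Δ g))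
      (AdjoinRoot.powerBasis' hΔ).basis]
  -- the evaluation map to `Fin m → K`
  have haev : ∀ (p : K[X]) (i : Fin m), (Polynomial.aeval x p : Fin m → K) i
      = p.eval (x i) := by
    intro p i
    have h1 := (Polynomial.aeval_algHom_apply (Pi.evalAlgHom K (fun _ => K) i) x p).symm
    simpa [Polynomial.coe_aeval_eq_eval] using h1
  have hroot : Polynomial.aeval (x : Fin m → K) Δ = 0 := by
    funext i
    rw [Pi.zero_apply, haev Δ i, hΔdef, Polynomial.eval_prod]
    exact Finset.prod_eq_zero (Finset.mem_univ i) (by simp)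
  set ev : AdjoinRoot Δ →ₐ[K] (Fin m → K) := AdjoinRoot.liftAlgHom Δ (Algebra.ofId K _) x hroot with hev
  have hevmk : ∀ (p : K[X]) (i : Fin m), ev (AdjoinRoot.mk Δ p) i = p.eval (x i) := by
    intro p i
    rw [hev]
    rw [show (AdjoinRoot.liftAlgHom Δ (Algebra.ofId K _) x hroot) (AdjoinRoot.mk Δ p) = Polynomial.aeval x p from
      AdjoinRoot.liftAlgHom_mk Δ _ x hroot p]
    exact haev p i
  have hinj : Function.Injective ev.toLinearMap := by
    show Function.Injective ev
    rw [injective_iff_map_eq_zero]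
    intro z
    induction z using AdjoinRoot.induction_on with
    | ih p =>
      intro hz
      rw [AdjoinRoot.mk_eq_zero, hΔdef]
      refine Fintype.prod_dvd_of_coprime ?_ fun i => ?_
      · intro i j hij
        exact Polynomial.isCoprime_X_sub_C_of_isUnit_sub
          (isUnit_iff_ne_zero.mpr (sub_ne_zero.mpr fun h => hij (hx h)))
      · rw [Polynomial.dvd_iff_isRoot, Polynomial.IsRoot, ← hevmk p i, hz]
        rfl
  have hfr : Module.finrank K (AdjoinRoot Δ) = Module.finrank K (Fin m → K) := by
    rw [(AdjoinRoot.powerBasis' hΔ).finrank, Module.finrank_fin_fun]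
    exact hdeg
  set eL : AdjoinRoot Δ ≃ₗ[K] (Fin m → K) :=
    LinearMap.linearEquivOfInjective ev.toLinearMap hinj hfr with heLdef
  have heL : ∀ z, eL z = ev z := fun z =>
    LinearMap.linearEquivOfInjective_apply hinj hfr z
  have hconj : eL.conj (LinearMap.mulLeft K (AdjoinRoot.mk Δ g))
      = LinearMap.mulLeft K (fun i => g.eval (x i)) := by
    apply LinearMap.ext
    intro w
    rw [LinearEquiv.conj_apply_apply, heL, LinearMap.mulLeft_apply, map_mul,
      LinearMap.mulLeft_apply]
    congr 1
    · funext i; exact hevmk g i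
    · rw [← heL, LinearEquiv.apply_symm_apply]
  rw [← LinearEquiv.charpoly_conj eL, hconj,
    ← LinearMap.charpoly_toMatrix (LinearMap.mulLeft K fun i => g.eval (x i))
      (Pi.basisFun K (Fin m))]
  have hdiag : LinearMap.toMatrix (Pi.basisFun K (Fin m)) (Pi.basisFun K (Fin m))
      (LinearMap.mulLeft K fun i => g.eval (x i))
      = Matrix.diagonal fun i => g.eval (x i) := by
    ext i j
    rw [LinearMap.toMatrix_apply, LinearMap.mulLeft_apply]
    simp [Matrix.diagonal, Pi.single_apply, eq_comm]
  rw [hdiag, charpoly_diagonal]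

end Aux

open Polynomial

variable (A : Type*) [CommRing A] (n : ℕ)

/-- `Δ(Y) = ∏_{i=1}^n (Y - X_i)` as a polynomial in `Y` over `R = A[X_1, …, X_n]`. -/
noncomputable def Delta : Polynomial (MvPolynomial (Fin n) A) :=
  ∏ i : Fin n, (X - C (MvPolynomial.X i))

theorem Delta_monic : (Delta A n).Monic :=
  monic_prod_of_monic _ _ fun i _ => monic_X_sub_C (MvPolynomial.X i)

/-- The basis `1, Y, …, Y^{n-1}` of the free rank-`n` module `R[Y]/(Δ(Y))`. -/
noncomputable def deltaPowerBasis :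
    PowerBasis (MvPolynomial (Fin n) A) (AdjoinRoot (Delta A n)) :=
  AdjoinRoot.powerBasis' (Delta_monic A n)

lemma Delta_map {A B : Type*} [CommRing A] [CommRing B] (φ : A →+* B) (n : ℕ) :
    (Delta A n).map
        (MvPolynomial.map φ : MvPolynomial (Fin n) A →+* MvPolynomial (Fin n) B)
      = Delta B n := by
  simp [Delta, Polynomial.map_prod]

lemma Delta_natDegree (A : Type*) [CommRing A] [Nontrivial A] (n : ℕ) :
    (Delta A n).natDegree = n := by
  rw [Delta, natDegree_prod_of_monic _ _ fun i _ => monic_X_sub_C _]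
  simp

lemma universal_charpoly {A : Type*} [CommRing A] [IsDomain A] (n : ℕ) (g : Polynomial A) :
    (modMat n (Delta A n) (g.map (algebraMap A (MvPolynomial (Fin n) A)))).charpoly
      = ∏ i : Fin n, (X - C (Polynomial.aeval (MvPolynomial.X i) g)) := by
  set R := MvPolynomial (Fin n) A
  set K := FractionRing R
  set ι : R →+* K := algebraMap R K with hι
  have hinj : Function.Injective ι := IsFractionRing.injective R K
  apply Polynomial.map_injective ι hinj
  have hΔK : (Delta A n).map ι = ∏ i : Fin n, (X - C (ι (MvPolynomial.X i))) := by
    simp [Delta, Polynomial.map_prod]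
  rw [← Matrix.charpoly_map, modMat_map ι n _ (Delta_monic A n), hΔK,
    charpoly_modMat_field (fun i => ι (MvPolynomial.X i))
      (fun i j hij => MvPolynomial.X_injective (hinj hij)),
    Polynomial.map_prod]
  refine Finset.prod_congr rfl fun i _ => ?_
  rw [Polynomial.map_sub, Polynomial.map_X, Polynomial.map_C]
  congr 1
  rw [Polynomial.eval_map, Polynomial.eval₂_hom, Polynomial.aeval_def, ← Polynomial.eval_map]

/-- For every `f ∈ A[X]`, the characteristic polynomial of the `R`-linear endomorphism of
`R[Y]/(Δ(Y))` given by multiplication by (the residue class of) `f(Y)` equals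
`∏_{i=1}^n (Z - f(X_i))`, where `R = A[X_1, …, X_n]` and `Δ(Y) = ∏_{i=1}^n (Y - X_i)`. -/
theorem charpoly_mul_adjoinRoot_Delta (f : Polynomial A) :
    (LinearMap.toMatrix (deltaPowerBasis A n).basis (deltaPowerBasis A n).basis
        (LinearMap.mulLeft (MvPolynomial (Fin n) A)
          (AdjoinRoot.mk (Delta A n)
            (f.map (algebraMap A (MvPolynomial (Fin n) A)))))).charpoly
      = ∏ i : Fin n, (X - C (Polynomial.aeval (MvPolynomial.X i) f)) := by
  rcases subsingleton_or_nontrivial A with hA | hA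
  · exact Subsingleton.elim _ _
  set R := MvPolynomial (Fin n) A
  show (LinearMap.toMatrix (AdjoinRoot.powerBasis' (Delta_monic A n)).basis
        (AdjoinRoot.powerBasis' (Delta_monic A n)).basis
        (LinearMap.mulLeft R (AdjoinRoot.mk (Delta A n)
          (f.map (algebraMap A R))))).charpoly = _
  rw [toMatrix_mulLeft_modMat (Delta_monic A n)]
  have hdn : (Delta A n).natDegree = n := Delta_natDegree A n
  have hre : (Matrix.reindex (finCongr hdn) (finCongr hdn))
      (modMat (Delta A n).natDegree (Delta A n) (f.map (algebraMap A R)))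
      = modMat n (Delta A n) (f.map (algebraMap A R)) := by
    ext i j
    simp [modMat, Matrix.reindex_apply]
  erw [← Matrix.charpoly_reindex (finCongr hdn)
      (modMat (Delta A n).natDegree (Delta A n) (f.map (algebraMap A R))), hre]
  -- the universal situation
  set d := f.natDegree
  set A₀ := MvPolynomial ℕ ℤ with hA₀
  set f₀ : Polynomial A₀ :=
    ∑ k ∈ Finset.range (d + 1), Polynomial.C (MvPolynomial.X k) * Polynomial.X ^ k with hf₀
  set φ : A₀ →+* A := (MvPolynomial.aeval fun k : ℕ => f.coeff k).toRingHom with hφ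
  have hφf : f₀.map φ = f := by
    rw [hf₀, Polynomial.map_sum]
    conv_rhs => rw [Polynomial.as_sum_range' f (d + 1) (lt_add_one d)]
    refine Finset.sum_congr rfl fun k _ => ?_
    rw [Polynomial.map_mul, Polynomial.map_C, Polynomial.map_pow, Polynomial.map_X,
      Polynomial.C_mul_X_pow_eq_monomial]
    exact congrArg (Polynomial.monomial k) (MvPolynomial.aeval_X (fun k : ℕ => f.coeff k) k)
  set R₀ := MvPolynomial (Fin n) A₀
  set ψ : R₀ →+* R := MvPolynomial.map φ with hψ
  have hcomp : ψ.comp (algebraMap A₀ R₀) = (algebraMap A R).comp φ := by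
    refine RingHom.ext fun a => ?_
    show ψ (MvPolynomial.C a) = MvPolynomial.C (φ a)
    rw [hψ, MvPolynomial.map_C]
  have key : (modMat n (Delta A₀ n)
        (f₀.map (algebraMap A₀ R₀))).map ψ
      = modMat n (Delta A n) (f.map (algebraMap A R)) := by
    rw [modMat_map ψ n _ (Delta_monic A₀ n), Delta_map φ n, Polynomial.map_map, hcomp,
      ← Polynomial.map_map, hφf]
  rw [← key, Matrix.charpoly_map, universal_charpoly n f₀, Polynomial.map_prod]
  refine Finset.prod_congr rfl fun i _ => ?_
  rw [Polynomial.map_sub, Polynomial.map_X, Polynomial.map_C]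
  congr 1
  rw [Polynomial.aeval_def, Polynomial.aeval_def, Polynomial.hom_eval₂, hcomp,
    ← Polynomial.eval₂_map, hφf]
  congr 1
  rw [hψ, MvPolynomial.map_X]
end

section
/- Let A be a commutative ring and F(X) = X^n - u_1 X^{n-1} + … + (-1)^n u_n a monic polynomial of positive degree n in A[X]. Let u_F be any A-algebra homomorphism from the symmetric subalgebra of A[X_1, …, X_n] to A satisfying u_F(e_i) = u_i for i = 1, …, n, where e_i is the i-th elementary symmetric polynomial in X_1, …, X_n. Then for every f ∈ A[X], the characteristic polynomial of the A-linear endomorphism μ_F(f) of A[X]/(F(X)) given by multiplication by the residue class of f equals Z^n - u_F(e_1(f(X_1), …, f(X_n))) Z^{n-1} + … + (-1)^n u_F(e_n(f(X_1), …, f(X_n))). (Here each e_i(f(X_1), …, f(X_n)) is a symmetric polynomial and hence lies in the symmetric subalgebra.) -/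
open MvPolynomial

/-- Substituting `X_j ↦ f(X_j)` into a symmetric polynomial yields a symmetric polynomial. -/
theorem subst_isSymmetric {A : Type*} [CommRing A] {n : ℕ} (f : Polynomial A)
    {p : MvPolynomial (Fin n) A} (hp : p.IsSymmetric) :
    (MvPolynomial.aeval
      (fun j => Polynomial.aeval (MvPolynomial.X j : MvPolynomial (Fin n) A) f) p).IsSymmetric := by
  intro e
  have h1 : (rename e) ((MvPolynomial.aeval
        (fun j => Polynomial.aeval (MvPolynomial.X j : MvPolynomial (Fin n) A) f)) p)
      = MvPolynomial.aeval
        (fun j => Polynomial.aeval (MvPolynomial.X (e j) : MvPolynomial (Fin n) A) f) p := by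
    rw [← AlgHom.comp_apply, comp_aeval]
    congr 1
    congr 1
    funext j
    rw [← Polynomial.aeval_algHom_apply (rename (R := A) e) (MvPolynomial.X j) f, rename_X]
  rw [h1]
  have h2 : (fun j => Polynomial.aeval (MvPolynomial.X (e j) : MvPolynomial (Fin n) A) f)
      = (fun j => Polynomial.aeval (MvPolynomial.X j : MvPolynomial (Fin n) A) f) ∘ e := rfl
  rw [h2, ← aeval_rename, hp e]

/-- The `i`-th elementary symmetric polynomial evaluated at `f(X_1), …, f(X_n)`,
as an element of the symmetric subalgebra of `A[X_1, …, X_n]`. -/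
noncomputable def esymmSubst {A : Type*} [CommRing A] {n : ℕ} (f : Polynomial A) (i : ℕ) :
    symmetricSubalgebra (Fin n) A :=
  ⟨MvPolynomial.aeval
      (fun j => Polynomial.aeval (MvPolynomial.X j : MvPolynomial (Fin n) A) f)
      (esymm (Fin n) A i),
   (mem_symmetricSubalgebra _).2 (subst_isSymmetric f (esymm_isSymmetric (Fin n) A i))⟩

/-- The `i`-th elementary symmetric polynomial as an element of the symmetric subalgebra. -/
noncomputable def esymmMem (A : Type*) [CommRing A] (n : ℕ) (i : ℕ) :
    symmetricSubalgebra (Fin n) A :=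
  ⟨esymm (Fin n) A i, (mem_symmetricSubalgebra _).2 (esymm_isSymmetric (Fin n) A i)⟩

section AuxCharpolyProof
open Polynomial

lemma aux_isRegular_X_sub_X {R : Type*} [CommRing R] {σ : Type*} [DecidableEq σ] {i j : σ}
    (h : j ≠ i) : IsRegular (MvPolynomial.X i - MvPolynomial.X j : MvPolynomial σ R) := by
  set v : σ → MvPolynomial σ R :=
    fun k => if k = i then MvPolynomial.X i + MvPolynomial.X j else MvPolynomial.X k with hv
  set w : σ → MvPolynomial σ R :=
    fun k => if k = i then MvPolynomial.X i - MvPolynomial.X j else MvPolynomial.X k with hw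
  have hcomp : (MvPolynomial.aeval (R := R) w).comp (MvPolynomial.aeval v) =
      AlgHom.id R (MvPolynomial σ R) := by
    apply MvPolynomial.algHom_ext
    intro k
    simp only [AlgHom.comp_apply, MvPolynomial.aeval_X, AlgHom.id_apply, hv]
    by_cases hk : k = i
    · subst hk
      simp [hw, h]
    · simp [hw, hk]
  have hinj : Function.Injective (MvPolynomial.aeval (R := R) v) :=
    Function.LeftInverse.injective (g := ⇑(MvPolynomial.aeval (R := R) w)) fun p => by
      rw [← AlgHom.comp_apply, hcomp, AlgHom.id_apply]
  have hval : MvPolynomial.aeval (R := R) v (MvPolynomial.X i - MvPolynomial.X j)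
      = MvPolynomial.X i := by
    simp [hv, h]
  have hleft : IsLeftRegular (MvPolynomial.X i - MvPolynomial.X j : MvPolynomial σ R) := by
    intro p q hpq
    simp only [Function.comp] at hpq
    apply hinj
    apply (MvPolynomial.isRegular_X (n := i) (σ := σ) (R := R)).left
    show MvPolynomial.X i * _ = MvPolynomial.X i * _
    rw [← hval, ← map_mul, ← map_mul]
    exact congrArg _ hpq
  exact ⟨hleft, fun p q hpq => hleft (by simpa only [mul_comm] using hpq)⟩

lemma aux_toMatrix_mulLeft {R : Type*} [CommRing R] {F : R[X]} (hF : F.Monic) (f : R[X]) :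
    LinearMap.toMatrix (AdjoinRoot.powerBasis' hF).basis (AdjoinRoot.powerBasis' hF).basis
      (LinearMap.mulLeft R (AdjoinRoot.mk F f))
    = Matrix.of (fun i j : Fin F.natDegree => ((f * Polynomial.X ^ (j : ℕ)) %ₘ F).coeff (i : ℕ)) := by
  ext i j
  rw [LinearMap.toMatrix_apply]
  have hbj : (AdjoinRoot.powerBasis' hF).basis j = AdjoinRoot.mk F (Polynomial.X ^ (j : ℕ)) := by
    rw [PowerBasis.basis_eq_pow (AdjoinRoot.powerBasis' hF) j, AdjoinRoot.powerBasis'_gen,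
      ← AdjoinRoot.mk_X, ← map_pow]
  rw [hbj, LinearMap.mulLeft_apply, ← map_mul]
  show (AdjoinRoot.powerBasisAux' hF).repr _ _ = _
  exact congrArg (fun p => Polynomial.coeff p (i : ℕ)) (AdjoinRoot.modByMonicHom_mk hF _)

lemma aux_matrix_map {R S : Type*} [CommRing R] [CommRing S] (σ : R →+* S) {F : R[X]}
    (hF : F.Monic) (f : R[X]) (n : ℕ) :
    (Matrix.of (fun i j : Fin n => ((f * Polynomial.X ^ (j : ℕ)) %ₘ F).coeff (i : ℕ))).map σ
      = Matrix.of (fun i j : Fin n =>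
          ((f.map σ * Polynomial.X ^ (j : ℕ)) %ₘ F.map σ).coeff (i : ℕ)) := by
  refine Matrix.ext fun i j => ?_
  simp only [Matrix.map_apply, Matrix.of_apply, ← Polynomial.coeff_map,
    Polynomial.map_modByMonic _ hF, Polynomial.map_mul, Polynomial.map_pow, Polynomial.map_X]

lemma aux_charpoly_modMatrix {A : Type*} [CommRing A] [Nontrivial A] {n : ℕ} (hn : 0 < n)
    (g : Polynomial (MvPolynomial (Fin n) A)) :
    (Matrix.of (fun i j : Fin n =>
        ((g * Polynomial.X ^ (j : ℕ)) %ₘ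
          (∏ k : Fin n, (Polynomial.X - Polynomial.C (MvPolynomial.X k)))).coeff (i : ℕ))).charpoly
      = ∏ k : Fin n, (Polynomial.X - Polynomial.C (Polynomial.eval (MvPolynomial.X k) g)) := by
  set G : Polynomial (MvPolynomial (Fin n) A) :=
    ∏ k : Fin n, (Polynomial.X - Polynomial.C (MvPolynomial.X k)) with hG
  have hGm : G.Monic := monic_prod_of_monic _ _ fun k _ => monic_X_sub_C _
  have hGdeg : G.natDegree = n := by
    rw [hG, natDegree_prod_of_monic _ _ fun k _ => monic_X_sub_C _]
    simp [natDegree_X_sub_C]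
  have hG1 : G ≠ 1 := fun hh => by simp [hh] at hGdeg; omega
  have hGe : ∀ i : Fin n, G.eval (MvPolynomial.X i) = 0 := fun i => by
    rw [hG, Polynomial.eval_prod]
    exact Finset.prod_eq_zero (Finset.mem_univ i) (by simp)
  have hdeg : ∀ p : Polynomial (MvPolynomial (Fin n) A), (p %ₘ G).natDegree < n := fun p => by
    have h := natDegree_modByMonic_lt p hGm hG1
    rwa [hGdeg] at h
  set M : Matrix (Fin n) (Fin n) (MvPolynomial (Fin n) A) := Matrix.of (fun i j : Fin n =>
      ((g * Polynomial.X ^ (j : ℕ)) %ₘ G).coeff (i : ℕ)) with hM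
  set V : Matrix (Fin n) (Fin n) (MvPolynomial (Fin n) A) :=
    Matrix.vandermonde (fun i : Fin n => (MvPolynomial.X i : MvPolynomial (Fin n) A)) with hV
  set D : Matrix (Fin n) (Fin n) (MvPolynomial (Fin n) A) :=
    Matrix.diagonal (fun k : Fin n => Polynomial.eval (MvPolynomial.X k) g) with hD
  have key : V * M = D * V := by
    refine Matrix.ext fun i j => ?_
    rw [Matrix.mul_apply, Matrix.diagonal_mul]
    have e1 : ∀ k : Fin n, V i k * M k j
        = ((g * Polynomial.X ^ (j : ℕ)) %ₘ G).coeff (k : ℕ) * (MvPolynomial.X i) ^ (k : ℕ) :=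
      fun k => mul_comm _ _
    calc ∑ k : Fin n, V i k * M k j
        = ∑ k ∈ Finset.range n,
            ((g * Polynomial.X ^ (j : ℕ)) %ₘ G).coeff k * (MvPolynomial.X i) ^ k := by
          rw [Finset.sum_congr rfl fun k _ => e1 k]
          exact Fin.sum_univ_eq_sum_range
            (fun k => ((g * Polynomial.X ^ (j : ℕ)) %ₘ G).coeff k * (MvPolynomial.X i) ^ k) n
      _ = Polynomial.eval (MvPolynomial.X i) ((g * Polynomial.X ^ (j : ℕ)) %ₘ G) :=
          (Polynomial.eval_eq_sum_range' (hdeg _) _).symm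
      _ = Polynomial.eval (MvPolynomial.X i) (g * Polynomial.X ^ (j : ℕ)) := by
          conv_rhs => rw [← modByMonic_add_div (g * Polynomial.X ^ (j : ℕ)) G]
          rw [Polynomial.eval_add, Polynomial.eval_mul, hGe i, zero_mul, add_zero]
      _ = Polynomial.eval (MvPolynomial.X i) g * (MvPolynomial.X i) ^ (j : ℕ) := by
          rw [Polynomial.eval_mul, Polynomial.eval_pow, Polynomial.eval_X]
  have hchar : (Polynomial.C : MvPolynomial (Fin n) A →+* Polynomial (MvPolynomial (Fin n) A)).mapMatrix V * Matrix.charmatrix M = Matrix.charmatrix D * (Polynomial.C : MvPolynomial (Fin n) A →+* Polynomial (MvPolynomial (Fin n) A)).mapMatrix V := by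
    unfold Matrix.charmatrix
    rw [Matrix.mul_sub, Matrix.sub_mul]
    refine congrArg₂ (· - ·) ?_ ?_
    · exact (Matrix.scalar_commute _ (fun r' => Commute.all _ r') _).symm
    · rw [← map_mul, key, map_mul]
  have hdet := congrArg Matrix.det hchar
  rw [Matrix.det_mul, Matrix.det_mul] at hdet
  have hdV : ((Polynomial.C : MvPolynomial (Fin n) A →+* Polynomial (MvPolynomial (Fin n) A)).mapMatrix V).det = Polynomial.C V.det := (RingHom.map_det _ _).symm
  have hregV : IsRegular V.det := by
    rw [hV, Matrix.det_vandermonde]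
    refine IsRegular.prod fun i _ => IsRegular.prod fun j hj => ?_
    exact aux_isRegular_X_sub_X (Finset.mem_Ioi.mp hj).ne
  have hl : IsLeftRegular (Polynomial.C V.det : Polynomial (MvPolynomial (Fin n) A)) := by
    intro p q hpq
    refine Polynomial.ext fun k => hregV.left ?_
    have h2 := congrArg (fun r => Polynomial.coeff r k) hpq
    simpa only [Polynomial.coeff_C_mul] using h2
  have hregC : IsRegular (Polynomial.C V.det : Polynomial (MvPolynomial (Fin n) A)) :=
    ⟨hl, fun p q hpq => hl (show Polynomial.C V.det * p = Polynomial.C V.det * q by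
      rw [mul_comm (Polynomial.C V.det) p, mul_comm (Polynomial.C V.det) q]; exact hpq)⟩
  have hDD : Matrix.charmatrix D = Matrix.diagonal
      (fun k : Fin n => Polynomial.X - Polynomial.C (Polynomial.eval (MvPolynomial.X k) g)) := by
    refine Matrix.ext fun i j => ?_
    by_cases h : i = j
    · subst h
      rw [Matrix.charmatrix_apply_eq, Matrix.diagonal_apply_eq, hD, Matrix.diagonal_apply_eq]
    · rw [Matrix.charmatrix_apply_ne _ _ _ h, Matrix.diagonal_apply_ne _ h, hD,
        Matrix.diagonal_apply_ne _ h, map_zero, neg_zero]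
  have hfin : Polynomial.C V.det * M.charpoly
      = Polynomial.C V.det * ∏ k : Fin n,
          (Polynomial.X - Polynomial.C (Polynomial.eval (MvPolynomial.X k) g)) := by
    unfold Matrix.charpoly
    rw [hdV] at hdet
    rw [hdet, hDD, Matrix.det_diagonal, mul_comm]
  exact hl hfin

lemma aux_prod_X_sub_C {R : Type*} [CommRing R] {n : ℕ} (w : Fin n → R) :
    ∏ i : Fin n, (Polynomial.X - Polynomial.C (w i)) =
      Polynomial.X ^ n + ∑ i ∈ Finset.Icc 1 n,
        Polynomial.C ((-1) ^ i * (Multiset.map w Finset.univ.val).esymm i)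
          * Polynomial.X ^ (n - i) := by
  have hcard : Multiset.card (Multiset.map w Finset.univ.val) = n := by simp
  have h := Multiset.prod_X_sub_X_eq_sum_esymm (Multiset.map w Finset.univ.val)
  rw [hcard] at h
  have hL : ∏ i : Fin n, (Polynomial.X - Polynomial.C (w i))
      = ((Multiset.map w Finset.univ.val).map fun t => Polynomial.X - Polynomial.C t).prod := by
    rw [Finset.prod_eq_multiset_prod, Multiset.map_map]
    rfl
  rw [hL, h]
  have hsplit : Finset.range (n + 1) = insert 0 (Finset.Icc 1 n) := by
    ext a
    simp [Nat.lt_succ_iff]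
    omega
  rw [hsplit, Finset.sum_insert (by simp)]
  have h0 : (Multiset.map w Finset.univ.val).esymm 0 = 1 := by
    simp [Multiset.esymm]
  rw [h0]
  simp only [pow_zero, map_one, one_mul, Nat.sub_zero]
  congr 1
  refine Finset.sum_congr rfl fun i _ => ?_
  simp only [map_mul, map_pow, map_neg, map_one]
  ring

lemma aux_monic {R : Type*} [CommRing R] {n : ℕ} (hn : 0 < n) (c : ℕ → R) :
    (Polynomial.X ^ n + ∑ i ∈ Finset.Icc 1 n,
      Polynomial.C (c i) * Polynomial.X ^ (n - i)).Monic := by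
  apply monic_X_pow_add
  apply lt_of_le_of_lt (Polynomial.degree_sum_le _ _)
  rw [Finset.sup_lt_iff (by exact WithBot.bot_lt_coe n)]
  intro i hi
  apply lt_of_le_of_lt (degree_C_mul_X_pow_le _ _)
  rw [Nat.cast_lt]
  have := Finset.mem_Icc.mp hi
  omega

lemma aux_natDegree {R : Type*} [CommRing R] [Nontrivial R] {n : ℕ} (hn : 0 < n) (c : ℕ → R) :
    (Polynomial.X ^ n + ∑ i ∈ Finset.Icc 1 n,
      Polynomial.C (c i) * Polynomial.X ^ (n - i)).natDegree = n := by
  have hd : (∑ i ∈ Finset.Icc 1 n, Polynomial.C (c i) * Polynomial.X ^ (n - i)).degree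
      < (Polynomial.X ^ n : Polynomial R).degree := by
    rw [degree_X_pow]
    apply lt_of_le_of_lt (Polynomial.degree_sum_le _ _)
    rw [Finset.sup_lt_iff (by exact WithBot.bot_lt_coe n)]
    intro i hi
    apply lt_of_le_of_lt (degree_C_mul_X_pow_le _ _)
    rw [Nat.cast_lt]
    have := Finset.mem_Icc.mp hi
    omega
  rw [natDegree_add_eq_left_of_degree_lt hd, natDegree_X_pow]

lemma aux_map_form {R S : Type*} [CommRing R] [CommRing S] (σ : R →+* S) (n : ℕ) (c : ℕ → R) :
    (Polynomial.X ^ n + ∑ i ∈ Finset.Icc 1 n,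
        Polynomial.C (c i) * Polynomial.X ^ (n - i)).map σ
    = Polynomial.X ^ n + ∑ i ∈ Finset.Icc 1 n,
        Polynomial.C (σ (c i)) * Polynomial.X ^ (n - i) := by
  rw [Polynomial.map_add, Polynomial.map_pow, Polynomial.map_X, Polynomial.map_sum]
  congr 1
  refine Finset.sum_congr rfl fun i _ => ?_
  rw [Polynomial.map_mul, Polynomial.map_C, Polynomial.map_pow, Polynomial.map_X]

set_option maxHeartbeats 1600000 in
set_option synthInstance.maxHeartbeats 1000000 in
theorem main_core {A : Type*} [CommRing A] [Nontrivial A] {n : ℕ} (hn : 0 < n)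
    (u : ℕ → A) (F : Polynomial A)
    (hFdef : F = Polynomial.X ^ n + ∑ i ∈ Finset.Icc 1 n,
      Polynomial.C ((-1) ^ i * u i) * Polynomial.X ^ (n - i))
    (uF : symmetricSubalgebra (Fin n) A →ₐ[A] A)
    (huF : ∀ i ∈ Finset.Icc 1 n, uF (esymmMem A n i) = u i)
    (f : Polynomial A) :
    (Matrix.of (fun i j : Fin n =>
        ((f * Polynomial.X ^ (j : ℕ)) %ₘ F).coeff (i : ℕ))).charpoly
      = Polynomial.X ^ n + ∑ i ∈ Finset.Icc 1 n,
        Polynomial.C ((-1) ^ i * uF (esymmSubst f i)) * Polynomial.X ^ (n - i) := by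
  haveI : Nontrivial (symmetricSubalgebra (Fin n) A) :=
    ⟨⟨0, 1, fun h => zero_ne_one (α := MvPolynomial (Fin n) A) (congrArg Subtype.val h)⟩⟩
  have hFSm : ((Polynomial.X : Polynomial (symmetricSubalgebra (Fin n) A)) ^ n + ∑ i ∈ Finset.Icc 1 n,
      Polynomial.C ((-1) ^ i * esymmMem A n i) * Polynomial.X ^ (n - i)).Monic :=
    aux_monic hn _
  have hcomp_uF : uF.toRingHom.comp (algebraMap A (symmetricSubalgebra (Fin n) A)) = RingHom.id A :=
    RingHom.ext fun a => by simpa using uF.commutes a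
  have hcomp_val : (symmetricSubalgebra (Fin n) A).val.toRingHom.comp (algebraMap A (symmetricSubalgebra (Fin n) A))
      = (MvPolynomial.C : A →+* MvPolynomial (Fin n) A) :=
    RingHom.ext fun a => by
      simpa [MvPolynomial.algebraMap_eq] using (symmetricSubalgebra (Fin n) A).val.commutes a
  have hfS_uF : (f.map (algebraMap A (symmetricSubalgebra (Fin n) A))).map uF.toRingHom = f := by
    rw [Polynomial.map_map, hcomp_uF, Polynomial.map_id]
  have hfS_val : (f.map (algebraMap A (symmetricSubalgebra (Fin n) A))).map (symmetricSubalgebra (Fin n) A).val.toRingHom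
      = f.map (MvPolynomial.C : A →+* MvPolynomial (Fin n) A) := by
    rw [Polynomial.map_map, hcomp_val]
  have hFS_uF : ((Polynomial.X : Polynomial (symmetricSubalgebra (Fin n) A)) ^ n + ∑ i ∈ Finset.Icc 1 n,
      Polynomial.C ((-1) ^ i * esymmMem A n i) * Polynomial.X ^ (n - i)).map uF.toRingHom
      = F := by
    rw [aux_map_form, hFdef]
    congr 1
    refine Finset.sum_congr rfl fun i hi => ?_
    rw [map_mul, map_pow, map_neg, map_one]
    have : uF.toRingHom (esymmMem A n i) = u i := huF i hi
    rw [this]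
  have hesymm_val : ∀ i : ℕ,
      (Multiset.map (fun k : Fin n => (MvPolynomial.X k : MvPolynomial (Fin n) A))
        Finset.univ.val).esymm i = esymm (Fin n) A i := fun i => by
    rw [MvPolynomial.esymm_eq_multiset_esymm]
  have hFS_val : ((Polynomial.X : Polynomial (symmetricSubalgebra (Fin n) A)) ^ n + ∑ i ∈ Finset.Icc 1 n,
      Polynomial.C ((-1) ^ i * esymmMem A n i) * Polynomial.X ^ (n - i)).map
        (symmetricSubalgebra (Fin n) A).val.toRingHom
      = ∏ k : Fin n, (Polynomial.X - Polynomial.C (MvPolynomial.X k)) := by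
    rw [aux_map_form, aux_prod_X_sub_C (fun k : Fin n =>
      (MvPolynomial.X k : MvPolynomial (Fin n) A))]
    refine congrArg (fun s => Polynomial.X ^ n + s) ?_
    refine Finset.sum_congr rfl fun i _ => ?_
    rw [map_mul, map_pow, map_neg, map_one, hesymm_val i]
    rfl
  have hesymm_subst : ∀ i : ℕ,
      (Multiset.map (fun k : Fin n => Polynomial.eval (MvPolynomial.X k)
          (f.map (MvPolynomial.C : A →+* MvPolynomial (Fin n) A))) Finset.univ.val).esymm i
      = ((esymmSubst f i : symmetricSubalgebra (Fin n) A) : MvPolynomial (Fin n) A) := fun i => by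
    have h := MvPolynomial.aeval_esymm_eq_multiset_esymm (σ := Fin n) (R := A)
      (S := MvPolynomial (Fin n) A) i (fun k : Fin n => Polynomial.eval (MvPolynomial.X k)
        (f.map (MvPolynomial.C : A →+* MvPolynomial (Fin n) A)))
    have hfuneq : (fun k : Fin n => Polynomial.eval (MvPolynomial.X k)
        (f.map (MvPolynomial.C : A →+* MvPolynomial (Fin n) A)))
        = fun j : Fin n => Polynomial.aeval (MvPolynomial.X j : MvPolynomial (Fin n) A) f := by
      funext k
      rw [Polynomial.aeval_def, MvPolynomial.algebraMap_eq, ← Polynomial.eval_map]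
    rw [← h, hfuneq]
    rfl
  -- charpoly of MS mapped by val
  have hMSval : ((Matrix.of (fun i j : Fin n =>
      (((f.map (algebraMap A (symmetricSubalgebra (Fin n) A))) * Polynomial.X ^ (j : ℕ)) %ₘ
        ((Polynomial.X : Polynomial (symmetricSubalgebra (Fin n) A)) ^ n + ∑ i ∈ Finset.Icc 1 n,
          Polynomial.C ((-1) ^ i * esymmMem A n i) * Polynomial.X ^ (n - i))).coeff (i : ℕ))).map
            (symmetricSubalgebra (Fin n) A).val.toRingHom).charpoly
      = Polynomial.map (symmetricSubalgebra (Fin n) A).val.toRingHom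
          (Polynomial.X ^ n + ∑ i ∈ Finset.Icc 1 n,
            Polynomial.C ((-1) ^ i * esymmSubst (n := n) f i) * Polynomial.X ^ (n - i)) := by
    rw [aux_matrix_map _ hFSm _ n, hfS_val, hFS_val,
      aux_charpoly_modMatrix hn (f.map (MvPolynomial.C : A →+* MvPolynomial (Fin n) A)),
      aux_prod_X_sub_C (fun k : Fin n => Polynomial.eval (MvPolynomial.X k)
        (f.map (MvPolynomial.C : A →+* MvPolynomial (Fin n) A))), aux_map_form]
    refine congrArg (fun s => Polynomial.X ^ n + s) ?_
    refine Finset.sum_congr rfl fun i _ => ?_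
    refine congrArg (fun z => Polynomial.C z * Polynomial.X ^ (n - i)) ?_
    rw [hesymm_subst i, map_mul, map_pow, map_neg, map_one]
    rfl
  have hMScp : (Matrix.of (fun i j : Fin n =>
      (((f.map (algebraMap A (symmetricSubalgebra (Fin n) A))) * Polynomial.X ^ (j : ℕ)) %ₘ
        ((Polynomial.X : Polynomial (symmetricSubalgebra (Fin n) A)) ^ n + ∑ i ∈ Finset.Icc 1 n,
          Polynomial.C ((-1) ^ i * esymmMem A n i) * Polynomial.X ^ (n - i))).coeff
            (i : ℕ))).charpoly
      = Polynomial.X ^ n + ∑ i ∈ Finset.Icc 1 n,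
          Polynomial.C ((-1) ^ i * esymmSubst (n := n) f i) * Polynomial.X ^ (n - i) := by
    have hinj : Function.Injective
        (Polynomial.map ((symmetricSubalgebra (Fin n) A).val.toRingHom :
          symmetricSubalgebra (Fin n) A →+* MvPolynomial (Fin n) A)) :=
      Polynomial.map_injective _ Subtype.val_injective
    apply hinj
    rw [← Matrix.charpoly_map, hMSval]
  have hMA : (Matrix.of (fun i j : Fin n =>
      (((f.map (algebraMap A (symmetricSubalgebra (Fin n) A))) * Polynomial.X ^ (j : ℕ)) %ₘ
        ((Polynomial.X : Polynomial (symmetricSubalgebra (Fin n) A)) ^ n + ∑ i ∈ Finset.Icc 1 n,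
          Polynomial.C ((-1) ^ i * esymmMem A n i) * Polynomial.X ^ (n - i))).coeff
            (i : ℕ))).map uF.toRingHom
      = Matrix.of (fun i j : Fin n =>
          ((f * Polynomial.X ^ (j : ℕ)) %ₘ F).coeff (i : ℕ)) := by
    rw [aux_matrix_map _ hFSm _ n, hfS_uF, hFS_uF]
  rw [← hMA, Matrix.charpoly_map, hMScp, aux_map_form]
  refine congrArg (fun s => Polynomial.X ^ n + s) ?_
  refine Finset.sum_congr rfl fun i _ => ?_
  rw [map_mul, map_pow, map_neg, map_one]
  rfl

end AuxCharpolyProof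

/-- Let `F(X) = X^n - u_1 X^{n-1} + … + (-1)^n u_n` be monic of positive degree `n` and let
`u_F` be an `A`-algebra homomorphism from the symmetric subalgebra of `A[X_1, …, X_n]` to `A`
with `u_F(e_i) = u_i`.  Then for every `f ∈ A[X]` the characteristic polynomial of
multiplication by `f` on `A[X]/(F)` (computed in the basis `1, X, …, X^{n-1}`) is
`Z^n + Σ_{i=1}^n (-1)^i u_F(e_i(f(X_1), …, f(X_n))) Z^{n-i}`. -/
theorem charpoly_mul_adjoinRoot_eq {A : Type*} [CommRing A] {n : ℕ} (hn : 0 < n)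
    (u : ℕ → A) (F : Polynomial A)
    (hFdef : F = Polynomial.X ^ n + ∑ i ∈ Finset.Icc 1 n, Polynomial.C ((-1) ^ i * u i) * Polynomial.X ^ (n - i))
    (hF : F.Monic)
    (uF : symmetricSubalgebra (Fin n) A →ₐ[A] A)
    (huF : ∀ i ∈ Finset.Icc 1 n, uF (esymmMem A n i) = u i)
    (f : Polynomial A) :
    (LinearMap.toMatrix (AdjoinRoot.powerBasis' hF).basis (AdjoinRoot.powerBasis' hF).basis
        (LinearMap.mulLeft A (AdjoinRoot.mk F f))).charpoly
      = Polynomial.X ^ n + ∑ i ∈ Finset.Icc 1 n,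
        Polynomial.C ((-1) ^ i * uF (esymmSubst f i)) * Polynomial.X ^ (n - i) := by
  rcases subsingleton_or_nontrivial A with hA | hA
  · exact Polynomial.ext fun k => Subsingleton.elim _ _
  · have hFdeg : F.natDegree = n := by rw [hFdef]; exact aux_natDegree hn _
    subst hFdeg
    rw [aux_toMatrix_mulLeft hF f]
    exact main_core hn u F hFdef uF huF f
end

section
/- Let A be a commutative ring, F(X) = X^n - u_1 X^{n-1} + … + (-1)^n u_n a monic polynomial of positive degree n in A[X], and let u_F be any A-algebra homomorphism from the symmetric subalgebra of A[X_1, …, X_n] to A satisfying u_F(e_i) = u_i for i = 1, …, n. Then for every f ∈ A[X], the determinant of the A-linear endomorphism μ_F(f) of A[X]/(F(X)) given by multiplication by the residue class of f equals u_F(∏_{i=1}^n f(X_i)) (note that ∏_{i=1}^n f(X_i) is a symmetric polynomial, i.e., the symmetric tensor f ⊗ … ⊗ f). -/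
open MvPolynomial

/-- The symmetric tensor `f ⊗ … ⊗ f`, i.e. `∏_{i=1}^n f(X_i)`, as an element of the symmetric
subalgebra of `A[X_1, …, X_n]`. -/
noncomputable def prodSubst {A : Type*} [CommRing A] {n : ℕ} (f : Polynomial A) :
    symmetricSubalgebra (Fin n) A :=
  ⟨∏ i : Fin n, Polynomial.aeval (MvPolynomial.X i : MvPolynomial (Fin n) A) f,
   (mem_symmetricSubalgebra _).2 (by
      have h : (∏ i : Fin n, Polynomial.aeval (MvPolynomial.X i : MvPolynomial (Fin n) A) f)
          = MvPolynomial.aeval (R := A)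
              (fun j => Polynomial.aeval (MvPolynomial.X j : MvPolynomial (Fin n) A) f)
              (∏ i : Fin n, MvPolynomial.X i) := by
        rw [map_prod]
        simp
      rw [h]
      exact subst_isSymmetric f (by
        intro e
        rw [map_prod]
        simp only [rename_X]
        exact Equiv.prod_comp e _))⟩

/-! ### Auxiliary material -/

section DetAux

open Polynomial

variable {A : Type*} [CommRing A]

/-- The multiplication matrix of `f` on `A[X]/(F)` in the power basis, written explicitly. -/
noncomputable def mulMatN (n : ℕ) (F f : Polynomial A) : Matrix (Fin n) (Fin n) A :=
  Matrix.of fun i j => ((f * Polynomial.X ^ (j : ℕ)) %ₘ F).coeff (i : ℕ)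

lemma mulMatN_map {A' : Type*} [CommRing A'] (ψ : A →+* A') {n : ℕ} {F : Polynomial A}
    (hF : F.Monic) (f : Polynomial A) :
    (mulMatN n F f).map ψ = mulMatN n (F.map ψ) (f.map ψ) := by
  ext i j
  simp only [mulMatN, Matrix.map_apply, Matrix.of_apply, ← Polynomial.coeff_map,
    Polynomial.map_modByMonic _ hF, Polynomial.map_mul, Polynomial.map_pow, Polynomial.map_X]

lemma toMatrix_mulLeft_eq_leftMulMatrix {S : Type*} [CommRing S] [Algebra A S]
    {ι : Type*} [Fintype ι] [DecidableEq ι] (b : Module.Basis ι A S) (x : S) :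
    LinearMap.toMatrix b b (LinearMap.mulLeft A x) = Algebra.leftMulMatrix b x := by
  ext i j
  rw [LinearMap.toMatrix_apply, LinearMap.mulLeft_apply, Algebra.leftMulMatrix_eq_repr_mul]

lemma det_leftMulMatrix_eq_det_mulMatN {n : ℕ} {F : Polynomial A} (hF : F.Monic)
    (hdeg : F.natDegree = n) (f : Polynomial A) :
    (Algebra.leftMulMatrix (AdjoinRoot.powerBasis' hF).basis (AdjoinRoot.mk F f)).det
      = (mulMatN n F f).det := by
  subst hdeg
  congr 1
  ext i j
  rw [Algebra.leftMulMatrix_eq_repr_mul]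
  have hb : (AdjoinRoot.powerBasis' hF).basis j = AdjoinRoot.mk F (Polynomial.X ^ (j : ℕ)) := by
    rw [(AdjoinRoot.powerBasis' hF).basis_eq_pow, AdjoinRoot.powerBasis'_gen, map_pow,
      AdjoinRoot.mk_X]
  rw [hb, ← map_mul]
  show ((AdjoinRoot.powerBasisAux' hF).repr _) i = _
  show (AdjoinRoot.modByMonicHom hF _).coeff (i : ℕ) = _
  rw [AdjoinRoot.modByMonicHom_mk]
  rfl

lemma eval_charpoly {R : Type*} [CommRing R] {ι : Type*} [Fintype ι] [DecidableEq ι]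
    (M : Matrix ι ι R) (r : R) :
    M.charpoly.eval r = (Matrix.scalar ι r - M).det := by
  have : M.charpoly.eval r = (Polynomial.evalRingHom r) M.charpoly := rfl
  rw [this, Matrix.charpoly, RingHom.map_det]
  congr 1
  ext i j
  by_cases h : i = j
  · subst h
    simp [Matrix.charmatrix_apply_eq]
  · simp [Matrix.charmatrix_apply_ne _ _ _ h, Matrix.scalar_apply, Matrix.diagonal_apply_ne _ h]

lemma list_prod_map_prod {ι L : Type*} [Fintype ι] [CommRing L] (l : List L)
    (g : ι → L → L) :
    (l.map fun r => ∏ i, g i r).prod = ∏ i, (l.map (g i)).prod := by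
  induction l with
  | nil => simp
  | cons a s ih => simp [ih, Finset.prod_mul_distrib]

lemma toList_map_prod {L M : Type*} [CommMonoid M] (s : Multiset L) (g : L → M) :
    (s.toList.map g).prod = (s.map g).prod := by
  conv_rhs => rw [← Multiset.coe_toList s]
  rw [Multiset.map_coe, Multiset.prod_coe]

lemma mapMatrix_aeval {K L : Type*} [CommRing K] [CommRing L] (ψ : K →+* L)
    {ι : Type*} [Fintype ι] [DecidableEq ι] (M : Matrix ι ι K) (f : Polynomial K) :
    ψ.mapMatrix (Polynomial.aeval M f) = Polynomial.aeval (M.map ψ) (f.map ψ) := by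
  rw [Polynomial.aeval_def, Polynomial.aeval_def, Polynomial.eval₂_map, Polynomial.hom_eval₂]
  congr 1
  ext a i j
  simp [Matrix.algebraMap_matrix_apply, apply_ite ψ]

lemma det_aeval_eq_prod_eval {K : Type*} [Field K] {ι : Type*} [Fintype ι] [DecidableEq ι]
    (M : Matrix ι ι K) (t : ι → K)
    (hchar : M.charpoly = ∏ i, (Polynomial.X - Polynomial.C (t i))) (f : Polynomial K) :
    (Polynomial.aeval M f).det = ∏ i, f.eval (t i) := by
  by_cases hf : f = 0
  · subst hf
    cases isEmpty_or_nonempty ι with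
    | inl h => simp [Matrix.det_isEmpty]
    | inr h =>
      simp only [map_zero, Polynomial.eval_zero]
      rw [Matrix.det_zero, Finset.prod_eq_zero (Finset.mem_univ (Classical.arbitrary ι)) rfl]
  · set L := f.SplittingField
    set ψ := algebraMap K L with hψ
    apply RingHom.injective ψ
    rw [show ψ ((Polynomial.aeval M f).det) = (ψ.mapMatrix (Polynomial.aeval M f)).det from
      RingHom.map_det ψ _, mapMatrix_aeval]
    set fL := f.map ψ with hfL
    have hfL0 : fL ≠ 0 := by
      simpa [hfL, Polynomial.map_eq_zero] using hf
    have hsplit : fL.Splits := by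
      exact Polynomial.SplittingField.splits f
    have hfact := hsplit.eq_prod_roots
    have hcharL : (M.map ψ).charpoly = ∏ i, (Polynomial.X - Polynomial.C (ψ (t i))) := by
      rw [Matrix.charpoly_map, hchar, Polynomial.map_prod]
      simp
    have hdet_lin : ∀ r : L, (M.map ψ - Matrix.scalar ι r).det
        = ∏ i, (ψ (t i) - r) := by
      intro r
      rw [show M.map ψ - Matrix.scalar ι r = -(Matrix.scalar ι r - M.map ψ) from
        (neg_sub _ _).symm, Matrix.det_neg, ← eval_charpoly, hcharL]
      simp only [Polynomial.eval_prod, Polynomial.eval_sub, Polynomial.eval_X, Polynomial.eval_C]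
      rw [show ((-1 : L) ^ Fintype.card ι) = ∏ _i : ι, (-1 : L) by
        rw [Finset.prod_const, Finset.card_univ], ← Finset.prod_mul_distrib]
      exact Finset.prod_congr rfl fun i _ => by ring
    have hterm : ∀ r : L, Polynomial.aeval (M.map ψ) (Polynomial.X - Polynomial.C r)
        = M.map ψ - Matrix.scalar ι r := by
      intro r
      rw [map_sub, Polynomial.aeval_X, Polynomial.aeval_C]
      rfl
    have h2 : Polynomial.aeval (M.map ψ) fL
        = (algebraMap L (Matrix ι ι L)) fL.leadingCoeff *
          (fL.roots.toList.map fun r => M.map ψ - Matrix.scalar ι r).prod := by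
      conv_lhs => rw [hfact, ← toList_map_prod fL.roots fun a => Polynomial.X - Polynomial.C a]
      rw [map_mul, Polynomial.aeval_C, map_list_prod (Polynomial.aeval (M.map ψ)), List.map_map]
      simp only [Function.comp_def, hterm]
    rw [h2, Matrix.det_mul]
    have hsc : (algebraMap L (Matrix ι ι L)) fL.leadingCoeff
        = fL.leadingCoeff • (1 : Matrix ι ι L) := Algebra.algebraMap_eq_smul_one _
    rw [hsc, Matrix.det_smul, Matrix.det_one, mul_one]
    rw [← Matrix.coe_detMonoidHom, map_list_prod (Matrix.detMonoidHom : Matrix ι ι L →* L), List.map_map]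
    have hdets : (fL.roots.toList.map
          ((Matrix.detMonoidHom : Matrix ι ι L →* L) ∘ fun r => M.map ψ - Matrix.scalar ι r))
        = fL.roots.toList.map fun r => ∏ i, (ψ (t i) - r) := by
      apply List.map_congr_left
      intro r _
      have : (Matrix.detMonoidHom : Matrix ι ι L →* L) (M.map ψ - Matrix.scalar ι r)
          = (M.map ψ - Matrix.scalar ι r).det := rfl
      rw [Function.comp_apply, this, hdet_lin r]
    rw [hdets, list_prod_map_prod fL.roots.toList (fun i r => ψ (t i) - r)]
    rw [show fL.leadingCoeff ^ Fintype.card ι = ∏ _i : ι, fL.leadingCoeff by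
      rw [Finset.prod_const, Finset.card_univ], ← Finset.prod_mul_distrib,
      show ψ (∏ i, f.eval (t i)) = ∏ i, ψ (f.eval (t i)) from map_prod ψ _ _]
    apply Finset.prod_congr rfl
    intro i _
    rw [show ψ (f.eval (t i)) = fL.eval (ψ (t i)) by
      rw [hfL, Polynomial.eval_map, Polynomial.eval₂_hom]]
    conv_rhs => rw [hfact]
    rw [Polynomial.eval_mul, Polynomial.eval_C, Polynomial.eval_multiset_prod,
      Multiset.map_map, ← toList_map_prod fL.roots]
    congr 1
    congr 1
    apply List.map_congr_left
    intro r _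
    simp

end DetAux


section SymmAux

open MvPolynomial

variable {B A : Type*} [CommRing B] [CommRing A]

lemma ringHom_aeval_comm (ψ : B →+* A) {σ : Type*} (g : σ → B) (q : MvPolynomial σ B) :
    ψ (MvPolynomial.aeval g q) = MvPolynomial.aeval (fun i => ψ (g i)) (MvPolynomial.map ψ q) := by
  rw [MvPolynomial.map_aeval, MvPolynomial.aeval_def, MvPolynomial.eval₂_map, coe_eval₂Hom,
    Algebra.algebraMap_self, Algebra.algebraMap_self, RingHom.comp_id, RingHom.id_comp]

lemma esymmAlgHom_map_comm (ψ : B →+* A) {n : ℕ} (q : MvPolynomial (Fin n) B) :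
    ((esymmAlgHom (Fin n) A n (MvPolynomial.map ψ q) : MvPolynomial (Fin n) A))
      = MvPolynomial.map ψ (esymmAlgHom (Fin n) B n q) := by
  rw [esymmAlgHom_apply, esymmAlgHom_apply, MvPolynomial.map_aeval, MvPolynomial.aeval_def,
    MvPolynomial.eval₂_map, coe_eval₂Hom, MvPolynomial.algebraMap_eq, MvPolynomial.algebraMap_eq,
    MvPolynomial.map_comp_C]
  simp_rw [MvPolynomial.map_esymm]

lemma prodSubst_map_comm (ψ : B →+* A) {n : ℕ} (f : Polynomial B) :
    ((prodSubst (n := n) (f.map ψ) : MvPolynomial (Fin n) A))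
      = MvPolynomial.map ψ (prodSubst (n := n) f) := by
  show (∏ i : Fin n, Polynomial.aeval (X i) (f.map ψ))
      = MvPolynomial.map ψ (∏ i : Fin n, Polynomial.aeval (X i) f)
  rw [map_prod]
  apply Finset.prod_congr rfl
  intro i _
  rw [Polynomial.aeval_def, Polynomial.aeval_def, Polynomial.eval₂_map, Polynomial.hom_eval₂,
    MvPolynomial.algebraMap_eq, MvPolynomial.algebraMap_eq, MvPolynomial.map_comp_C,
    MvPolynomial.map_X]

noncomputable def esymmEquiv (A : Type*) [CommRing A] (n : ℕ) :
    MvPolynomial (Fin n) A ≃ₐ[A] symmetricSubalgebra (Fin n) A :=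
  AlgEquiv.ofBijective _ (esymmAlgHom_fin_bijective A n)

lemma esymmEquiv_apply {A : Type*} [CommRing A] {n : ℕ} (q : MvPolynomial (Fin n) A) :
    esymmEquiv A n q = esymmAlgHom (Fin n) A n q := rfl

lemma esymmEquiv_symm_map (ψ : B →+* A) {n : ℕ} (f : Polynomial B) :
    (esymmEquiv A n).symm (prodSubst (f.map ψ))
      = MvPolynomial.map ψ ((esymmEquiv B n).symm (prodSubst f)) := by
  apply (esymmEquiv A n).injective
  rw [AlgEquiv.apply_symm_apply, esymmEquiv_apply]
  have hq : esymmAlgHom (Fin n) B n ((esymmEquiv B n).symm (prodSubst f)) = prodSubst f := by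
    rw [← esymmEquiv_apply, AlgEquiv.apply_symm_apply]
  rw [Subtype.ext_iff, esymmAlgHom_map_comm, hq]
  exact prodSubst_map_comm ψ f

end SymmAux

section Generic

open MvPolynomial Polynomial

variable (n d : ℕ)

/-- The generic coefficient ring. -/
abbrev URing := MvPolynomial (Fin n ⊕ Fin (d + 1)) ℤ

/-- Coefficients of the generic `f`. -/
abbrev BRing := MvPolynomial (Fin (d + 1)) ℤ

/-- Generic roots. -/
noncomputable def tvar (i : Fin n) : URing n d := MvPolynomial.X (Sum.inl i)

/-- Generic coefficients of `f`. -/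
noncomputable def avar (j : Fin (d + 1)) : URing n d := MvPolynomial.X (Sum.inr j)

/-- Value of elementary symmetric polynomial at the generic roots. -/
noncomputable def esymmVal (k : ℕ) : URing n d :=
  ∑ s ∈ Finset.powersetCard k Finset.univ, ∏ i ∈ s, tvar n d i

/-- Generic coefficients of `F`. -/
noncomputable def uvar (k : ℕ) : URing n d :=
  if h : k - 1 < n then MvPolynomial.X (Sum.inl ⟨k - 1, h⟩) else 0

/-- The generic polynomial `f`. -/
noncomputable def fgen : Polynomial (URing n d) :=
  ∑ j : Fin (d + 1), Polynomial.C (avar n d j) * Polynomial.X ^ (j : ℕ)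

/-- The generic monic polynomial `F`. -/
noncomputable def Fgen : Polynomial (URing n d) :=
  Polynomial.X ^ n + ∑ i ∈ Finset.Icc 1 n,
    Polynomial.C ((-1) ^ i * uvar n d i) * Polynomial.X ^ (n - i)

/-- The map sending the generic coefficients `u_i` of `F` to the corresponding elementary
symmetric polynomials in the generic roots. -/
noncomputable def θhom : URing n d →+* URing n d :=
  ((sumAlgEquiv ℤ (Fin n) (Fin (d + 1))).symm.toAlgHom.toRingHom.comp
    (((symmetricSubalgebra (Fin n) (BRing d)).val.toRingHom.comp
      (esymmAlgHom (Fin n) (BRing d) n).toRingHom))).comp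
    (sumAlgEquiv ℤ (Fin n) (Fin (d + 1))).toAlgHom.toRingHom

lemma θhom_apply (x : URing n d) :
    θhom n d x = (sumAlgEquiv ℤ (Fin n) (Fin (d + 1))).symm
      ((esymmAlgHom (Fin n) (BRing d) n ((sumAlgEquiv ℤ (Fin n) (Fin (d + 1))) x) :
        MvPolynomial (Fin n) (BRing d))) := rfl

lemma θhom_injective : Function.Injective (θhom n d) := by
  have h : ⇑(θhom n d) = ⇑(sumAlgEquiv ℤ (Fin n) (Fin (d + 1))).symm ∘
      ((Subtype.val : symmetricSubalgebra (Fin n) (BRing d) → MvPolynomial (Fin n) (BRing d)) ∘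
        ⇑(esymmAlgHom (Fin n) (BRing d) n)) ∘ ⇑(sumAlgEquiv ℤ (Fin n) (Fin (d + 1))) := rfl
  rw [h]
  exact ((sumAlgEquiv ℤ (Fin n) (Fin (d + 1))).symm.injective.comp
    (Subtype.coe_injective.comp (esymmAlgHom_fin_injective _ le_rfl))).comp
    (sumAlgEquiv ℤ (Fin n) (Fin (d + 1))).injective

lemma θhom_tvar (i : Fin n) : θhom n d (tvar n d i) = esymmVal n d ((i : ℕ) + 1) := by
  rw [θhom_apply, tvar, sumAlgEquiv_X_inl, esymmAlgHom_apply,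
    MvPolynomial.aeval_X]
  rw [MvPolynomial.esymm, map_sum]
  unfold esymmVal
  apply Finset.sum_congr rfl
  intro s _
  rw [map_prod]
  apply Finset.prod_congr rfl
  intro k _
  rw [sumAlgEquiv_symm_X]
  rfl

lemma θhom_avar (j : Fin (d + 1)) : θhom n d (avar n d j) = avar n d j := by
  rw [θhom_apply, avar, sumAlgEquiv_X_inr]
  have h : (esymmAlgHom (Fin n) (BRing d) n (MvPolynomial.C (MvPolynomial.X j)) :
      MvPolynomial (Fin n) (BRing d)) = MvPolynomial.C (MvPolynomial.X j) := by
    rw [← MvPolynomial.algebraMap_eq, AlgHom.commutes]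
    rfl
  rw [h, sumAlgEquiv_symm_C_X]

lemma Fgen_shape_aux {R : Type*} [CommRing R] [Nontrivial R] {n : ℕ} (hn : 0 < n) (c : ℕ → R) :
    (Polynomial.X ^ n + ∑ i ∈ Finset.Icc 1 n,
      Polynomial.C (c i) * Polynomial.X ^ (n - i)).Monic ∧
    (Polynomial.X ^ n + ∑ i ∈ Finset.Icc 1 n,
      Polynomial.C (c i) * Polynomial.X ^ (n - i)).natDegree = n := by
  have hdeg : (∑ i ∈ Finset.Icc 1 n, Polynomial.C (c i) * Polynomial.X ^ (n - i)).degree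
      < (n : WithBot ℕ) := by
    apply lt_of_le_of_lt (Polynomial.degree_sum_le _ _)
    rw [Finset.sup_lt_iff (by exact_mod_cast WithBot.bot_lt_coe n)]
    intro i hi
    apply lt_of_le_of_lt (Polynomial.degree_C_mul_X_pow_le _ _)
    rw [Finset.mem_Icc] at hi
    exact_mod_cast (by omega : n - i < n)
  constructor
  · exact Polynomial.monic_X_pow_add hdeg
  · apply Polynomial.natDegree_eq_of_degree_eq_some
    rw [Polynomial.degree_add_eq_left_of_degree_lt
      (by rwa [Polynomial.degree_X_pow]), Polynomial.degree_X_pow]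

lemma det_mulMatN_of_roots {R : Type*} [CommRing R] [IsDomain R] {n : ℕ} (t : Fin n → R)
    (f : Polynomial R) :
    (mulMatN n (∏ i, (Polynomial.X - Polynomial.C (t i))) f).det = ∏ i, f.eval (t i) := by
  set F := ∏ i : Fin n, (Polynomial.X - Polynomial.C (t i)) with hFdef
  have hF : F.Monic := Polynomial.monic_prod_of_monic _ _ fun i _ => Polynomial.monic_X_sub_C _
  have hdeg : F.natDegree = n := by
    rw [hFdef, Polynomial.natDegree_prod_of_monic _ _ fun i _ => Polynomial.monic_X_sub_C _]
    simp
  have hinj : Function.Injective (algebraMap R (FractionRing R)) :=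
    IsFractionRing.injective R (FractionRing R)
  apply hinj
  set φ := algebraMap R (FractionRing R)
  rw [show φ ((mulMatN n F f).det) = ((mulMatN n F f).map φ).det from RingHom.map_det _ _,
    mulMatN_map φ hF]
  have hFKm : (F.map φ).Monic := hF.map φ
  have hdegK : (F.map φ).natDegree = n := by rw [hF.natDegree_map]; exact hdeg
  rw [← det_leftMulMatrix_eq_det_mulMatN hFKm hdegK (f.map φ)]
  rw [show AdjoinRoot.mk (F.map φ) (f.map φ)
      = Polynomial.aeval (AdjoinRoot.root (F.map φ)) (f.map φ) from (AdjoinRoot.aeval_eq _).symm,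
    ← Polynomial.aeval_algHom_apply]
  have hchar : (Algebra.leftMulMatrix (AdjoinRoot.powerBasis' hFKm).basis
      (AdjoinRoot.root (F.map φ))).charpoly
      = ∏ i' : Fin (F.map φ).natDegree, (Polynomial.X
          - Polynomial.C (φ (t (Fin.cast hdegK i')))) := by
    have h1 := charpoly_leftMulMatrix (AdjoinRoot.powerBasis' hFKm)
    rw [AdjoinRoot.powerBasis'_gen] at h1
    have h2 : ∏ i' : Fin (Polynomial.map φ F).natDegree,
        (Polynomial.X - Polynomial.C (φ (t (Fin.cast hdegK i'))))
        = ∏ i : Fin n, (Polynomial.X - Polynomial.C (φ (t i))) :=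
      Equiv.prod_comp (finCongr hdegK) fun i => Polynomial.X - Polynomial.C (φ (t i))
    rw [h1, AdjoinRoot.minpoly_root hFKm.ne_zero, hFKm.leadingCoeff, inv_one, map_one, mul_one,
      h2, hFdef, Polynomial.map_prod]
    simp
  rw [det_aeval_eq_prod_eval _ _ hchar (f.map φ)]
  rw [show φ (∏ i, f.eval (t i)) = ∏ i, φ (f.eval (t i)) from map_prod φ _ _]
  rw [← Equiv.prod_comp (finCongr hdegK) (fun i => φ (f.eval (t i)))]
  apply Finset.prod_congr rfl
  intro i' _
  rw [Polynomial.eval_map, Polynomial.eval₂_hom]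
  rfl

lemma Fgen_monic (hn : 0 < n) : (Fgen n d).Monic :=
  (Fgen_shape_aux hn _).1

lemma Fgen_natDegree (hn : 0 < n) : (Fgen n d).natDegree = n :=
  (Fgen_shape_aux hn _).2

lemma aeval_tvar_esymm (k : ℕ) :
    MvPolynomial.aeval (tvar n d) (esymm (Fin n) (URing n d) k) = esymmVal n d k := by
  rw [MvPolynomial.esymm, map_sum]
  apply Finset.sum_congr rfl
  intro s _
  rw [map_prod]
  apply Finset.prod_congr rfl
  intro k _
  rw [MvPolynomial.aeval_X]

lemma Fgen_map_theta (hn : 0 < n) :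
    (Fgen n d).map (θhom n d) = ∏ i : Fin n, (Polynomial.X - Polynomial.C (tvar n d i)) := by
  have hprod : (∏ i : Fin n, (Polynomial.X - Polynomial.C (tvar n d i)))
      = ((Finset.univ.val.map (tvar n d)).map fun t => Polynomial.X - Polynomial.C t).prod := by
    rw [Multiset.map_map]
    rfl
  rw [hprod, Multiset.prod_X_sub_X_eq_sum_esymm]
  have hcard : Multiset.card (Finset.univ.val.map (tvar n d)) = n := by simp
  have hesymm : ∀ j, (Finset.univ.val.map (tvar n d)).esymm j = esymmVal n d j := by
    intro j
    rw [Finset.esymm_map_val]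
    rfl
  simp only [hcard, hesymm]
  rw [Fgen, Polynomial.map_add, Polynomial.map_pow, Polynomial.map_X, Polynomial.map_sum]
  have hrange : Finset.range (n + 1) = insert 0 (Finset.Icc 1 n) := by
    ext x
    simp only [Finset.mem_range, Finset.mem_Icc, Finset.mem_insert]
    omega
  rw [hrange, Finset.sum_insert (by simp)]
  have h0 : esymmVal n d 0 = 1 := by
    simp [esymmVal]
  rw [h0, pow_zero, one_mul, map_one, one_mul, Nat.sub_zero]
  congr 1
  apply Finset.sum_congr rfl
  intro i hi
  rw [Polynomial.map_mul, Polynomial.map_C, Polynomial.map_pow, Polynomial.map_X]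
  rw [map_mul, map_pow, map_neg, map_one]
  have hu : θhom n d (uvar n d i) = esymmVal n d i := by
    rw [Finset.mem_Icc] at hi
    rw [uvar, dif_pos (by omega : i - 1 < n)]
    have h := θhom_tvar n d ⟨i - 1, by omega⟩
    rw [tvar] at h
    rw [h]
    congr 1
    simp only [Fin.val_mk]
    omega
  rw [hu, Polynomial.C_mul, Polynomial.C_pow, map_neg, map_one]
  ring

lemma fgen_map_coeffs {A : Type*} [CommRing A] (ψ : URing n d →+* A) :
    (fgen n d).map ψ = ∑ j : Fin (d + 1), Polynomial.C (ψ (avar n d j)) * Polynomial.X ^ (j : ℕ) := by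
  rw [fgen, Polynomial.map_sum]
  apply Finset.sum_congr rfl
  intro j _
  rw [Polynomial.map_mul, Polynomial.map_C, Polynomial.map_pow, Polynomial.map_X]

lemma generic_identity (hn : 0 < n) :
    (mulMatN n (Fgen n d) (fgen n d)).det
      = MvPolynomial.aeval (tvar n d)
          ((esymmEquiv (URing n d) n).symm (prodSubst (fgen n d))) := by
  apply θhom_injective n d
  rw [show (θhom n d) ((mulMatN n (Fgen n d) (fgen n d)).det)
      = ((mulMatN n (Fgen n d) (fgen n d)).map (θhom n d)).det from RingHom.map_det _ _,
    mulMatN_map _ (Fgen_monic n d hn), Fgen_map_theta n d hn,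
    det_mulMatN_of_roots (tvar n d) ((fgen n d).map (θhom n d))]
  rw [ringHom_aeval_comm (θhom n d) (tvar n d)]
  rw [← esymmEquiv_symm_map (θhom n d) (fgen n d)]
  -- now: ∏ i, ((fgen).map θ).eval (tvar i) = aeval (fun i => θ (tvar i)) ((esymmEquiv _ n).symm (prodSubst ((fgen).map θ)))
  simp only [θhom_tvar]
  set g := (fgen n d).map (θhom n d) with hg
  set q := (esymmEquiv (URing n d) n).symm (prodSubst g) with hq
  have hesym : esymmAlgHom (Fin n) (URing n d) n q = prodSubst g := by
    rw [hq, ← esymmEquiv_apply, AlgEquiv.apply_symm_apply]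
  have h1 : MvPolynomial.aeval (tvar n d) ((esymmAlgHom (Fin n) (URing n d) n q :
      MvPolynomial (Fin n) (URing n d))) = MvPolynomial.aeval
        (fun i : Fin n => esymmVal n d ((i : ℕ) + 1)) q := by
    rw [esymmAlgHom_apply, ← AlgHom.comp_apply, MvPolynomial.comp_aeval]
    simp_rw [aeval_tvar_esymm]
  have h2 : MvPolynomial.aeval (tvar n d)
      ((prodSubst (n := n) g : MvPolynomial (Fin n) (URing n d)))
      = ∏ i, g.eval (tvar n d i) := by
    show MvPolynomial.aeval (tvar n d) (∏ i : Fin n, Polynomial.aeval (MvPolynomial.X i) g) = _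
    rw [map_prod]
    apply Finset.prod_congr rfl
    intro i _
    rw [← Polynomial.aeval_algHom_apply, MvPolynomial.aeval_X, Polynomial.aeval_def,
      Polynomial.eval₂_eq_eval_map, Algebra.algebraMap_self, Polynomial.map_id]
  calc ∏ i, g.eval (tvar n d i)
      = MvPolynomial.aeval (tvar n d)
          ((prodSubst (n := n) g : MvPolynomial (Fin n) (URing n d))) :=
        h2.symm
    _ = MvPolynomial.aeval (tvar n d) ((esymmAlgHom (Fin n) (URing n d) n q :
          MvPolynomial (Fin n) (URing n d))) := by rw [hesym]
    _ = _ := h1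

end Generic

/-- Let `F(X) = X^n - u_1 X^{n-1} + … + (-1)^n u_n` be monic of positive degree `n`, and let
`u_F` be an `A`-algebra homomorphism from the symmetric subalgebra of `A[X_1, …, X_n]` to `A`
with `u_F(e_i) = u_i`.  Then for every `f ∈ A[X]` the determinant of multiplication by `f` on
`A[X]/(F)` (computed in the basis `1, X, …, X^{n-1}`) equals `u_F(∏_{i=1}^n f(X_i))`. -/
theorem det_mul_adjoinRoot_eq {A : Type*} [CommRing A] {n : ℕ} (hn : 0 < n)
    (u : ℕ → A) (F : Polynomial A)
    (hFdef : F = Polynomial.X ^ n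
        + ∑ i ∈ Finset.Icc 1 n, Polynomial.C ((-1) ^ i * u i) * Polynomial.X ^ (n - i))
    (hF : F.Monic)
    (uF : symmetricSubalgebra (Fin n) A →ₐ[A] A)
    (huF : ∀ i ∈ Finset.Icc 1 n, uF (esymmMem A n i) = u i)
    (f : Polynomial A) :
    (LinearMap.toMatrix (AdjoinRoot.powerBasis' hF).basis (AdjoinRoot.powerBasis' hF).basis
        (LinearMap.mulLeft A (AdjoinRoot.mk F f))).det
      = uF (prodSubst f) := by
  nontriviality A
  classical
  set d := f.natDegree with hd
  set ω : URing n d →+* A := MvPolynomial.eval₂Hom (Int.castRingHom A)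
    (Sum.elim (fun i : Fin n => u ((i : ℕ) + 1)) (fun j : Fin (d + 1) => f.coeff (j : ℕ)))
    with hω
  have hωt : ∀ i : Fin n, ω (tvar n d i) = u ((i : ℕ) + 1) := by
    intro i; rw [hω, tvar]; simp
  have hωa : ∀ j : Fin (d + 1), ω (avar n d j) = f.coeff (j : ℕ) := by
    intro j; rw [hω, avar]; simp
  have hFgen_monic := Fgen_monic n d hn
  have hFmap : (Fgen n d).map ω = F := by
    rw [Fgen, hFdef, Polynomial.map_add, Polynomial.map_pow, Polynomial.map_X,
      Polynomial.map_sum]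
    congr 1
    apply Finset.sum_congr rfl
    intro i hi
    rw [Polynomial.map_mul, Polynomial.map_C, Polynomial.map_pow, Polynomial.map_X]
    congr 2
    rw [map_mul, map_pow, map_neg, map_one]
    congr 1
    rw [Finset.mem_Icc] at hi
    rw [uvar, dif_pos (by omega : i - 1 < n)]
    have h := hωt ⟨i - 1, by omega⟩
    rw [tvar] at h
    rw [h]
    simp only [Fin.val_mk]
    congr 1
    omega
  have hfmap : (fgen n d).map ω = f := by
    rw [fgen_map_coeffs]
    simp_rw [hωa]
    conv_rhs => rw [f.as_sum_range' (d + 1) (by omega)]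
    rw [← Fin.sum_univ_eq_sum_range (fun j => (Polynomial.monomial j) (f.coeff j)) (d + 1)]
    apply Finset.sum_congr rfl
    intro j _
    rw [Polynomial.C_mul_X_pow_eq_monomial]
  have hFdeg : F.natDegree = n := by
    rw [← hFmap, hFgen_monic.natDegree_map, Fgen_natDegree n d hn]
  have huF' : uF (prodSubst f) = MvPolynomial.aeval (fun i : Fin n => u ((i : ℕ) + 1))
      ((esymmEquiv A n).symm (prodSubst f)) := by
    have hcomp : (uF.comp (esymmAlgHom (Fin n) A n))
        = MvPolynomial.aeval (fun i : Fin n => u ((i : ℕ) + 1)) := by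
      apply MvPolynomial.algHom_ext
      intro i
      rw [AlgHom.comp_apply, MvPolynomial.aeval_X]
      have hXi : esymmAlgHom (Fin n) A n (MvPolynomial.X i) = esymmMem A n ((i : ℕ) + 1) := by
        rw [Subtype.ext_iff, esymmAlgHom_apply, MvPolynomial.aeval_X]
        rfl
      rw [hXi]
      exact huF _ (Finset.mem_Icc.mpr
        ⟨Nat.succ_le_succ (Nat.zero_le _), Nat.succ_le_of_lt i.isLt⟩)
    conv_lhs => rw [show prodSubst f = esymmAlgHom (Fin n) A n ((esymmEquiv A n).symm
      (prodSubst f)) by rw [← esymmEquiv_apply, AlgEquiv.apply_symm_apply]]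
    rw [← AlgHom.comp_apply, hcomp]
  rw [toMatrix_mulLeft_eq_leftMulMatrix, det_leftMulMatrix_eq_det_mulMatN hF hFdeg f, huF']
  rw [← hfmap, ← hFmap, ← mulMatN_map ω hFgen_monic,
    show ((mulMatN n (Fgen n d) (fgen n d)).map ⇑ω).det
      = ω ((mulMatN n (Fgen n d) (fgen n d)).det) from (RingHom.map_det ω _).symm,
    esymmEquiv_symm_map ω (fgen n d),
    show (fun i : Fin n => u ((i : ℕ) + 1)) = fun i => ω (tvar n d i) from
      funext fun i => (hωt i).symm,
    ← ringHom_aeval_comm ω (tvar n d)]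
  exact congrArg ω (generic_identity n d hn)
end

section
/- Let A be a commutative ring and let P(X) and Q(X) be monic polynomials in A[X] of positive degrees p and q respectively. Then N_P(Q(X)) = (-1)^{pq} · N_Q(P(X)); that is, the determinant of the A-linear endomorphism of A[X]/(P) given by multiplication by the residue class of Q equals (-1)^{pq} times the determinant of the A-linear endomorphism of A[X]/(Q) given by multiplication by the residue class of P. -/
open Polynomial Matrix

namespace NormRec

variable {A : Type*} [CommRing A]

/-- The norm matrix: matrix (in the basis `1, X, ..., X^(n-1)`) of multiplication by `f`
on `A[X]/(P)`. -/
noncomputable def nmat (n : ℕ) (P f : A[X]) : Matrix (Fin n) (Fin n) A :=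
  fun i j => ((f * X ^ (j : ℕ)) %ₘ P).coeff i

lemma leftMulMatrix_eq_nmat {P : A[X]} (hP : P.Monic) (f : A[X]) :
    Algebra.leftMulMatrix (AdjoinRoot.powerBasis' hP).basis (AdjoinRoot.mk P f)
      = nmat P.natDegree P f := by
  ext i j
  rw [Algebra.leftMulMatrix_eq_repr_mul]
  have hb : (AdjoinRoot.powerBasis' hP).basis j = AdjoinRoot.mk P (X ^ (j : ℕ)) := by
    rw [(AdjoinRoot.powerBasis' hP).basis_eq_pow, AdjoinRoot.powerBasis'_gen, ← AdjoinRoot.mk_X,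
      ← map_pow]
  rw [hb, ← _root_.map_mul]
  show ((AdjoinRoot.powerBasisAux' hP).repr ((AdjoinRoot.mk P) (f * X ^ (j : ℕ)))) i = _
  rw [AdjoinRoot.powerBasisAux'_repr_apply_to_fun hP _ i, AdjoinRoot.modByMonicHom_mk]
  rfl

lemma toMatrix_eq_nmat {P : A[X]} (hP : P.Monic) (f : A[X]) :
    LinearMap.toMatrix (AdjoinRoot.powerBasis' hP).basis (AdjoinRoot.powerBasis' hP).basis
      (LinearMap.mulLeft A (AdjoinRoot.mk P f)) = nmat P.natDegree P f := by
  rw [← leftMulMatrix_eq_nmat hP f, Algebra.leftMulMatrix_apply]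
  congr 1

lemma nmat_map {B : Type*} [CommRing B] (φ : A →+* B) {P : A[X]} (hP : P.Monic) (f : A[X])
    (n : ℕ) : nmat n (P.map φ) (f.map φ) = (nmat n P f).map φ := by
  ext i j
  simp only [nmat, Matrix.map_apply]
  rw [show (X : B[X]) ^ (j : ℕ) = (X ^ (j : ℕ) : A[X]).map φ by simp, ← Polynomial.map_mul,
    ← map_modByMonic φ hP, coeff_map]

lemma det_nmat_map {B : Type*} [CommRing B] (φ : A →+* B) {P : A[X]} (hP : P.Monic) (f : A[X])
    (n : ℕ) : (nmat n (P.map φ) (f.map φ)).det = φ ((nmat n P f).det) := by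
  rw [nmat_map φ hP f n, ← RingHom.mapMatrix_apply, ← RingHom.map_det]

section Field

variable {K : Type*} [Field K] [IsAlgClosed K]

lemma det_nmat_eq_prod {P Q : K[X]} (hP : P.Monic) (hQ : Q.Monic) :
    (nmat P.natDegree P Q).det
      = (-1) ^ (P.natDegree * Q.natDegree) * (Q.roots.map fun β => P.eval β).prod := by
  classical
  set pb := AdjoinRoot.powerBasis' hP with hpb
  set M : Matrix (Fin P.natDegree) (Fin P.natDegree) K :=
    Algebra.leftMulMatrix pb.basis (AdjoinRoot.root P) with hM
  have hchar : M.charpoly = P := by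
    have h1 : M.charpoly = minpoly K pb.gen := charpoly_leftMulMatrix pb
    rw [h1, AdjoinRoot.powerBasis'_gen, AdjoinRoot.minpoly_root hP.ne_zero, hP.leadingCoeff,
      inv_one, C_1, mul_one]
  have hdet : ∀ β : K, (M - β • 1).det = (-1) ^ P.natDegree * P.eval β := by
    intro β
    have h2 : (β • 1 - M).det = P.eval β := by
      have h3 : (charmatrix M).map (Polynomial.evalRingHom β) = β • 1 - M := by
        ext i j
        by_cases h : i = j
        · subst h
          simp [charmatrix_apply_eq, Matrix.sub_apply, Matrix.smul_apply, Matrix.one_apply]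
        · simp [charmatrix_apply_ne _ _ _ h, Matrix.sub_apply, Matrix.smul_apply,
            Matrix.one_apply_ne h]
      have h4 := (Polynomial.evalRingHom β).map_det (charmatrix M)
      rw [RingHom.mapMatrix_apply, h3] at h4
      rw [← h4, ← Matrix.charpoly, hchar]
      rfl
    rw [show M - β • 1 = -(β • 1 - M) from (neg_sub _ _).symm, Matrix.det_neg, Fintype.card_fin, h2]
  have hroots : Multiset.card Q.roots = Q.natDegree :=
    splits_iff_card_roots.mp (IsAlgClosed.splits Q)
  have haev : nmat P.natDegree P Q = Polynomial.aeval M Q := by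
    rw [← leftMulMatrix_eq_nmat hP Q, ← AdjoinRoot.aeval_eq, ← Polynomial.aeval_algHom_apply]
    rfl
  have hQfac : Q = (Q.roots.map fun a => X - C a).prod :=
    ((IsAlgClosed.splits Q).eq_prod_roots_of_monic hQ)
  have haev2 : (Polynomial.aeval M Q).det
      = (Q.roots.map fun a => ((-1) ^ P.natDegree * P.eval a)).prod := by
    set F : K[X] →* K :=
      Matrix.detMonoidHom.comp (Polynomial.aeval M : K[X] →ₐ[K] _).toRingHom.toMonoidHom with hF
    have hFapp : ∀ g : K[X], F g = (Polynomial.aeval M g).det := fun g => rfl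
    calc (Polynomial.aeval M Q).det = F Q := (hFapp Q).symm
      _ = F (Q.roots.map fun a => X - C a).prod := by rw [← hQfac]
      _ = ((Q.roots.map fun a => X - C a).map F).prod := map_multiset_prod F _
      _ = (Q.roots.map fun a => ((-1) ^ P.natDegree * P.eval a)).prod := by
          rw [Multiset.map_map]
          apply congrArg
          apply Multiset.map_congr rfl
          intro a _
          rw [Function.comp_apply, hFapp]
          have haevX : Polynomial.aeval M (X - C a) = M - a • 1 := by
            simp [Algebra.algebraMap_eq_smul_one]
          rw [haevX, hdet a]
  rw [haev, haev2, Multiset.prod_map_mul]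
  congr 1
  rw [Multiset.map_const', Multiset.prod_replicate, hroots, ← pow_mul]

lemma field_case {P Q : K[X]} (hP : P.Monic) (hQ : Q.Monic) :
    (nmat P.natDegree P Q).det
      = (-1) ^ (P.natDegree * Q.natDegree) * (nmat Q.natDegree Q P).det := by
  classical
  have hProots : Multiset.card P.roots = P.natDegree :=
    splits_iff_card_roots.mp (IsAlgClosed.splits P)
  have hQroots : Multiset.card Q.roots = Q.natDegree :=
    splits_iff_card_roots.mp (IsAlgClosed.splits Q)
  have key : (Q.roots.map fun β => P.eval β).prod
      = (-1) ^ (P.natDegree * Q.natDegree) * (P.roots.map fun α => Q.eval α).prod := by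
    have hPfac : P = (P.roots.map fun a => X - C a).prod :=
      (IsAlgClosed.splits P).eq_prod_roots_of_monic hP
    have hQfac : Q = (Q.roots.map fun a => X - C a).prod :=
      (IsAlgClosed.splits Q).eq_prod_roots_of_monic hQ
    have hPe : ∀ β : K, P.eval β = (P.roots.map fun α => β - α).prod := by
      intro β
      conv_lhs => rw [hPfac]
      rw [eval_multiset_prod, Multiset.map_map]
      congr 1
      apply Multiset.map_congr rfl
      intro a _; simp
    have hQe : ∀ α : K, Q.eval α = (Q.roots.map fun β => α - β).prod := by
      intro α
      conv_lhs => rw [hQfac]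
      rw [eval_multiset_prod, Multiset.map_map]
      congr 1
      apply Multiset.map_congr rfl
      intro a _; simp
    calc (Q.roots.map fun β => P.eval β).prod
        = (Q.roots.map fun β => (P.roots.map fun α => β - α).prod).prod := by
          congr 1; exact Multiset.map_congr rfl fun β _ => hPe β
      _ = (Q.roots.map fun β => (P.roots.map fun α => (-1) * (α - β)).prod).prod := by
          congr 1; apply Multiset.map_congr rfl; intro β _
          congr 1; apply Multiset.map_congr rfl; intro α _; ring
      _ = (Q.roots.map fun β => (-1 : K) ^ P.natDegree *
            (P.roots.map fun α => α - β).prod).prod := by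
          congr 1; apply Multiset.map_congr rfl; intro β _
          rw [Multiset.prod_map_mul, Multiset.map_const', Multiset.prod_replicate, hProots]
      _ = (-1) ^ (P.natDegree * Q.natDegree)
            * (Q.roots.map fun β => (P.roots.map fun α => α - β).prod).prod := by
          rw [Multiset.prod_map_mul, Multiset.map_const', Multiset.prod_replicate, hQroots,
            ← pow_mul]
      _ = (-1) ^ (P.natDegree * Q.natDegree) * (P.roots.map fun α => Q.eval α).prod := by
          congr 1
          rw [Multiset.prod_map_prod_map]
          exact congrArg Multiset.prod (Multiset.map_congr rfl fun α _ => (hQe α).symm)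
  rw [det_nmat_eq_prod hP hQ, det_nmat_eq_prod hQ hP, key, mul_comm Q.natDegree P.natDegree]

end Field

section Universal

variable (p q : ℕ)

/-- The generic monic polynomial of degree `p`. -/
noncomputable def genP : (MvPolynomial (Fin p ⊕ Fin q) ℤ)[X] :=
  X ^ p + ∑ i : Fin p, C (MvPolynomial.X (Sum.inl i)) * X ^ (i : ℕ)

/-- The generic monic polynomial of degree `q`. -/
noncomputable def genQ : (MvPolynomial (Fin p ⊕ Fin q) ℤ)[X] :=
  X ^ q + ∑ j : Fin q, C (MvPolynomial.X (Sum.inr j)) * X ^ (j : ℕ)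

lemma genP_monic : (genP p q).Monic := monic_X_pow_add (degree_sum_fin_lt _)

lemma genQ_monic : (genQ p q).Monic := monic_X_pow_add (degree_sum_fin_lt _)

lemma genP_natDegree : (genP p q).natDegree = p := by
  have h : (genP p q).degree = (p : WithBot ℕ) := by
    rw [genP, degree_add_eq_left_of_degree_lt (by rw [degree_X_pow]; exact degree_sum_fin_lt _)]
    exact degree_X_pow p
  exact natDegree_eq_of_degree_eq_some h

lemma genQ_natDegree : (genQ p q).natDegree = q := by
  have h : (genQ p q).degree = (q : WithBot ℕ) := by
    rw [genQ, degree_add_eq_left_of_degree_lt (by rw [degree_X_pow]; exact degree_sum_fin_lt _)]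
    exact degree_X_pow q
  exact natDegree_eq_of_degree_eq_some h

/-- The reciprocity law for the generic polynomials. -/
lemma gen_reciprocity :
    (nmat p (genP p q) (genQ p q)).det
      = (-1) ^ (p * q) * (nmat q (genQ p q) (genP p q)).det := by
  set R := MvPolynomial (Fin p ⊕ Fin q) ℤ
  let K := AlgebraicClosure (FractionRing R)
  let ι : R →+* K := (algebraMap (FractionRing R) K).comp (algebraMap R (FractionRing R))
  have hιinj : Function.Injective ι := by
    rw [RingHom.coe_comp]
    exact (RingHom.injective (algebraMap (FractionRing R) K)).comp
      (IsFractionRing.injective R (FractionRing R))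
  have hbase : (nmat p ((genP p q).map ι) ((genQ p q).map ι)).det
      = (-1) ^ (p * q) * (nmat q ((genQ p q).map ι) ((genP p q).map ι)).det := by
    have h := field_case (K := K) ((genP_monic p q).map ι) ((genQ_monic p q).map ι)
    rw [(genP_monic p q).natDegree_map ι, (genQ_monic p q).natDegree_map ι,
      genP_natDegree, genQ_natDegree] at h
    exact h
  apply hιinj
  rw [_root_.map_mul, _root_.map_pow, _root_.map_neg, _root_.map_one,
    ← det_nmat_map ι (genP_monic p q) (genQ p q) p, ← det_nmat_map ι (genQ_monic p q) (genP p q) q,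
    hbase]

end Universal

/-- The reciprocity law at the level of `nmat`, over an arbitrary commutative ring. -/
lemma nmat_reciprocity {P Q : A[X]} (hP : P.Monic) (hQ : Q.Monic) :
    (nmat P.natDegree P Q).det
      = (-1) ^ (P.natDegree * Q.natDegree) * (nmat Q.natDegree Q P).det := by
  classical
  set p := P.natDegree with hpdef
  set q := Q.natDegree with hqdef
  set φ : MvPolynomial (Fin p ⊕ Fin q) ℤ →+* A := MvPolynomial.eval₂Hom (Int.castRingHom A)
    (Sum.elim (fun i : Fin p => P.coeff i) fun j : Fin q => Q.coeff j) with hφ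
  have hφX1 : ∀ i : Fin p, φ (MvPolynomial.X (Sum.inl i)) = P.coeff i := by
    intro i
    rw [hφ, MvPolynomial.eval₂Hom_X', Sum.elim_inl]
  have hφX2 : ∀ j : Fin q, φ (MvPolynomial.X (Sum.inr j)) = Q.coeff j := by
    intro j
    rw [hφ, MvPolynomial.eval₂Hom_X', Sum.elim_inr]
  have hPmap : (genP p q).map φ = P := by
    rw [genP, Polynomial.map_add, Polynomial.map_pow, map_X, Polynomial.map_sum]
    have h : ∀ i : Fin p, ((C (MvPolynomial.X (Sum.inl i)) * X ^ (i : ℕ)).map φ)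
        = C (P.coeff i) * X ^ (i : ℕ) := by
      intro i
      rw [Polynomial.map_mul, map_C, Polynomial.map_pow, map_X, hφX1]
    rw [Finset.sum_congr rfl fun i _ => h i]
    conv_rhs => rw [hP.as_sum]
    rw [← hpdef, ← Fin.sum_univ_eq_sum_range fun i => C (P.coeff i) * X ^ i]
  have hQmap : (genQ p q).map φ = Q := by
    rw [genQ, Polynomial.map_add, Polynomial.map_pow, map_X, Polynomial.map_sum]
    have h : ∀ j : Fin q, ((C (MvPolynomial.X (Sum.inr j)) * X ^ (j : ℕ)).map φ)
        = C (Q.coeff j) * X ^ (j : ℕ) := by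
      intro j
      rw [Polynomial.map_mul, map_C, Polynomial.map_pow, map_X, hφX2]
    rw [Finset.sum_congr rfl fun j _ => h j]
    conv_rhs => rw [hQ.as_sum]
    rw [← hqdef, ← Fin.sum_univ_eq_sum_range fun j => C (Q.coeff j) * X ^ j]
  have h := congrArg φ (gen_reciprocity p q)
  rw [_root_.map_mul, _root_.map_pow, _root_.map_neg, _root_.map_one,
    ← det_nmat_map φ (genP_monic p q) (genQ p q) p, ← det_nmat_map φ (genQ_monic p q) (genP p q) q,
    hPmap, hQmap] at h
  exact h

end NormRec

open NormRec in
/-- For monic polynomials `P, Q ∈ A[X]` of positive degrees `p` and `q`,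
`N_P(Q) = (-1)^{pq} N_Q(P)`: the determinant of multiplication by `Q` on `A[X]/(P)` equals
`(-1)^{pq}` times the determinant of multiplication by `P` on `A[X]/(Q)` (determinants computed
in the bases `1, X, …`). -/
theorem norm_reciprocity {A : Type*} [CommRing A] {P Q : Polynomial A}
    (hP : P.Monic) (hQ : Q.Monic) (hp : 0 < P.natDegree) (hq : 0 < Q.natDegree) :
    (LinearMap.toMatrix (AdjoinRoot.powerBasis' hP).basis (AdjoinRoot.powerBasis' hP).basis
        (LinearMap.mulLeft A (AdjoinRoot.mk P Q))).det
      = (-1) ^ (P.natDegree * Q.natDegree) *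
        (LinearMap.toMatrix (AdjoinRoot.powerBasis' hQ).basis (AdjoinRoot.powerBasis' hQ).basis
          (LinearMap.mulLeft A (AdjoinRoot.mk Q P))).det := by
  rw [toMatrix_eq_nmat hP Q, toMatrix_eq_nmat hQ P]
  exact nmat_reciprocity hP hQ
end

section
/- Let A be a commutative ring, U a multiplicatively closed subset of A[X] containing 1, and F ∈ A[X] a monic polynomial of positive degree n. Then the following three assertions are equivalent: (1) the canonical map A[X]/(F) → A[X]_U/(F·A[X]_U) is an isomorphism; (2) the residue classes of 1, X, …, X^{n-1} modulo F·A[X]_U form a basis of A[X]_U/(F·A[X]_U) as an A-module; (3) for every f ∈ U, the norm N_F(f) is a unit in A. -/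
open Polynomial

theorem span_le_comap_span_localization {A : Type*} [CommRing A]
    (U : Submonoid (Polynomial A)) (F : Polynomial A) :
    Ideal.span {F} ≤
      (Ideal.span {algebraMap (Polynomial A) (Localization U) F}).comap
        (algebraMap (Polynomial A) (Localization U)) :=
  Ideal.span_le.2 (Set.singleton_subset_iff.2 (Ideal.mem_comap.2 (Ideal.subset_span rfl)))

/-- A linear map is bijective iff it sends a basis to a linearly independent spanning family. -/
theorem bijective_iff_image_basis {R M N : Type*} [CommRing R] [AddCommGroup M] [AddCommGroup N]
    [Module R M] [Module R N] {ι : Type*} (b : Module.Basis ι R M) (f : M →ₗ[R] N) (v : ι → N)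
    (hv : ∀ i, f (b i) = v i) :
    Function.Bijective f ↔
      LinearIndependent R v ∧ Submodule.span R (Set.range v) = ⊤ := by
  have hveq : v = fun i => f (b i) := funext fun i => (hv i).symm
  subst hveq
  constructor
  · intro h
    have he : (fun i => f (b i)) = fun i => (b.map (LinearEquiv.ofBijective f h)) i := by
      funext i; simp [Module.Basis.map_apply, LinearEquiv.ofBijective_apply]
    rw [he]
    exact ⟨(b.map (LinearEquiv.ofBijective f h)).linearIndependent,
      (b.map (LinearEquiv.ofBijective f h)).span_eq⟩
  · rintro ⟨hli, hsp⟩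
    set c := Module.Basis.mk hli (le_of_eq hsp.symm) with hc
    have : f = (b.equiv c (Equiv.refl ι)).toLinearMap := by
      refine b.ext fun i => ?_
      rw [LinearEquiv.coe_coe, Module.Basis.equiv_apply, Equiv.refl_apply, hc, Module.Basis.mk_apply]
    rw [this]
    exact (b.equiv c (Equiv.refl ι)).bijective

/-- In a commutative algebra, an element is a unit iff left multiplication by it is a unit
endomorphism. -/
theorem isUnit_iff_isUnit_mulLeft {A B : Type*} [CommRing A] [CommRing B] [Algebra A B] (x : B) :
    IsUnit x ↔ IsUnit (LinearMap.mulLeft A x) := by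
  constructor
  · rintro ⟨u, rfl⟩
    refine ⟨⟨LinearMap.mulLeft A (u : B), LinearMap.mulLeft A (↑u⁻¹ : B), ?_, ?_⟩, rfl⟩
    · rw [Module.End.mul_eq_comp, ← LinearMap.mulLeft_mul, Units.mul_inv, LinearMap.mulLeft_one,
        Module.End.one_eq_id]
    · rw [Module.End.mul_eq_comp, ← LinearMap.mulLeft_mul, Units.inv_mul, LinearMap.mulLeft_one,
        Module.End.one_eq_id]
  · intro h
    obtain ⟨y, hy⟩ := ((Module.End.isUnit_iff _).mp h).2 1
    exact IsUnit.of_mul_eq_one (a := x) y (by simpa [LinearMap.mulLeft_apply] using hy)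

/-- In a commutative algebra free with a finite basis, an element is a unit iff the determinant
of multiplication by it is a unit. -/
theorem isUnit_iff_isUnit_det_mulLeft {A B : Type*} [CommRing A] [CommRing B] [Algebra A B]
    {ι : Type*} [Fintype ι] [DecidableEq ι] (b : Module.Basis ι A B) (x : B) :
    IsUnit x ↔ IsUnit (LinearMap.toMatrix b b (LinearMap.mulLeft A x)).det := by
  rw [isUnit_iff_isUnit_mulLeft (A := A) x, ← Matrix.isUnit_iff_isUnit_det]
  have hmat : LinearMap.toMatrix b b (LinearMap.mulLeft A x) =
      LinearMap.toMatrixAlgEquiv b (LinearMap.mulLeft A x) := rfl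
  rw [hmat]
  constructor
  · exact fun h => h.map (LinearMap.toMatrixAlgEquiv b)
  · intro h
    have := h.map (LinearMap.toMatrixAlgEquiv b).symm
    rwa [AlgEquiv.symm_apply_apply] at this

/-- The quotient of a localization by the extension of an ideal is the localization of the
quotient. -/
theorem isLocalization_quotient {R S : Type*} [CommRing R] [CommRing S] [Algebra R S]
    (M : Submonoid R) [IsLocalization M S] (I : Ideal R) (J : Ideal S)
    (hJ : J = I.map (algebraMap R S)) (h : I ≤ J.comap (algebraMap R S)) :
    @IsLocalization _ _ (M.map (Ideal.Quotient.mk I)) (S ⧸ J) _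
      (Ideal.quotientMap J (algebraMap R S) h).toAlgebra := by
  letI := (Ideal.quotientMap J (algebraMap R S) h).toAlgebra
  have halg : algebraMap (R ⧸ I) (S ⧸ J) = Ideal.quotientMap J (algebraMap R S) h := rfl
  refine ⟨fun y => ?_, fun z => ?_, fun {x y} hxy => ?_⟩
  · obtain ⟨r, hr, hy⟩ := y.2
    rw [halg, ← hy, Ideal.quotientMap_mk]
    exact (IsLocalization.map_units S ⟨r, hr⟩).map (Ideal.Quotient.mk J)
  · obtain ⟨z, rfl⟩ := Ideal.Quotient.mk_surjective z
    obtain ⟨⟨a, s⟩, e⟩ := IsLocalization.surj M z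
    refine ⟨⟨Ideal.Quotient.mk I a,
      ⟨Ideal.Quotient.mk I (s : R), Submonoid.mem_map_of_mem _ s.2⟩⟩, ?_⟩
    rw [halg]
    simp only [Ideal.quotientMap_mk]
    rw [← map_mul, e]
  · obtain ⟨a, rfl⟩ := Ideal.Quotient.mk_surjective x
    obtain ⟨b, rfl⟩ := Ideal.Quotient.mk_surjective y
    rw [halg, Ideal.quotientMap_mk, Ideal.quotientMap_mk] at hxy
    have hm : algebraMap R S (a - b) ∈ J := by
      rw [map_sub]
      exact Ideal.Quotient.eq.mp hxy
    rw [hJ, IsLocalization.mem_map_algebraMap_iff M] at hm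
    obtain ⟨⟨i, u⟩, hi⟩ := hm
    rw [← map_mul] at hi
    obtain ⟨c, hc⟩ := (IsLocalization.eq_iff_exists M S).mp hi
    refine ⟨⟨Ideal.Quotient.mk I ((c : R) * (u : R)),
      Submonoid.mem_map_of_mem _ (mul_mem c.2 u.2)⟩, ?_⟩
    show Ideal.Quotient.mk I ((c : R) * (u : R)) * Ideal.Quotient.mk I a =
      Ideal.Quotient.mk I ((c : R) * (u : R)) * Ideal.Quotient.mk I b
    rw [← map_mul, ← map_mul, Ideal.Quotient.eq]
    have h2 : (c : R) * (u : R) * a - (c : R) * (u : R) * b = (c : R) * ((a - b) * (u : R)) := by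
      ring
    rw [h2, hc]
    exact I.mul_mem_left _ i.2

/-- Let `U ⊆ A[X]` be multiplicatively closed and `F ∈ A[X]` monic of positive degree `n`.
The following are equivalent:
1. the canonical map `A[X]/(F) → A[X]_U/(F·A[X]_U)` is an isomorphism;
2. the residue classes of `1, X, …, X^{n-1}` form a basis of the `A`-module
   `A[X]_U/(F·A[X]_U)`;
3. for every `f ∈ U`, the norm `N_F(f)` (the determinant of multiplication by `f` on
   `A[X]/(F)`, computed in the basis `1, X, …, X^{n-1}`) is a unit of `A`. -/
theorem tfae_fraction_map_iso {A : Type*} [CommRing A] (U : Submonoid (Polynomial A))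
    {F : Polynomial A} (hF : F.Monic) (hdeg : 0 < F.natDegree) :
    List.TFAE
      [ Function.Bijective
          (Ideal.quotientMap (Ideal.span {algebraMap (Polynomial A) (Localization U) F})
            (algebraMap (Polynomial A) (Localization U))
            (span_le_comap_span_localization U F)),
        LinearIndependent A
            (fun i : Fin F.natDegree =>
              (Ideal.Quotient.mk (Ideal.span {algebraMap (Polynomial A) (Localization U) F})
                (algebraMap (Polynomial A) (Localization U) (X ^ (i : ℕ)))))
          ∧ Submodule.span A
              (Set.range fun i : Fin F.natDegree =>
                (Ideal.Quotient.mk (Ideal.span {algebraMap (Polynomial A) (Localization U) F})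
                  (algebraMap (Polynomial A) (Localization U) (X ^ (i : ℕ))))) = ⊤,
        ∀ f ∈ U, IsUnit
          (LinearMap.toMatrix (AdjoinRoot.powerBasis' hF).basis (AdjoinRoot.powerBasis' hF).basis
            (LinearMap.mulLeft A (AdjoinRoot.mk F f))).det ] := by
  set I : Ideal (Polynomial A) := Ideal.span {F} with hI
  set J : Ideal (Localization U) :=
    Ideal.span {algebraMap (Polynomial A) (Localization U) F} with hJdef
  have hJ : J = I.map (algebraMap (Polynomial A) (Localization U)) := by
    rw [hJdef, hI, Ideal.map_span, Set.image_singleton]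
  set φ := Ideal.quotientMap J (algebraMap (Polynomial A) (Localization U))
    (span_le_comap_span_localization U F) with hφ
  -- φ as an A-algebra hom
  set ψ : (Polynomial A ⧸ I) →ₐ[A] (Localization U ⧸ J) :=
    Ideal.quotientMapₐ J (IsScalarTower.toAlgHom A (Polynomial A) (Localization U))
      (span_le_comap_span_localization U F) with hψ
  have hψφ : ⇑ψ = ⇑φ := rfl
  -- images of the power basis
  have hbasis : ∀ i : Fin F.natDegree, ψ ((AdjoinRoot.powerBasis' hF).basis i) =
      Ideal.Quotient.mk J (algebraMap (Polynomial A) (Localization U) (X ^ (i : ℕ))) := by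
    intro i
    have h1 : (AdjoinRoot.powerBasis' hF).basis i = AdjoinRoot.mk F (X ^ (i : ℕ)) := by
      rw [(AdjoinRoot.powerBasis' hF).basis_eq_pow i, map_pow]
      rfl
    rw [h1]
    show φ (Ideal.Quotient.mk I (X ^ (i : ℕ))) = _
    rw [hφ, Ideal.quotientMap_mk]
  -- key equivalence: bijectivity ↔ all elements of U become units in A[X]/(F)
  have key : Function.Bijective φ ↔ ∀ f ∈ U, IsUnit (Ideal.Quotient.mk I f) := by
    constructor
    · intro h f hf
      set e := RingEquiv.ofBijective φ h with he
      have h1 : IsUnit (e (Ideal.Quotient.mk I f)) := by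
        show IsUnit (φ (Ideal.Quotient.mk I f))
        rw [hφ, Ideal.quotientMap_mk]
        exact (IsLocalization.map_units (Localization U) ⟨f, hf⟩).map (Ideal.Quotient.mk J)
      have h2 := h1.map e.symm
      rwa [RingEquiv.symm_apply_apply] at h2
    · intro hU
      letI := @RingHom.toAlgebra _ _ (Ideal.Quotient.commSemiring I) (Ideal.Quotient.commSemiring J) φ
      haveI : IsLocalization (U.map (Ideal.Quotient.mk I)) (Localization U ⧸ J) :=
        isLocalization_quotient U I J hJ (span_le_comap_span_localization U F)
      have hunit : ∀ s : U.map (Ideal.Quotient.mk I), IsUnit (s : Polynomial A ⧸ I) := by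
        rintro ⟨s, r, hr, rfl⟩
        exact hU r hr
      constructor
      · intro x y hxy
        obtain ⟨c, hc⟩ := (IsLocalization.eq_iff_exists (U.map (Ideal.Quotient.mk I))
          (Localization U ⧸ J)).mp (show algebraMap _ _ x = algebraMap _ _ y from hxy)
        exact (hunit c).mul_left_cancel hc
      · intro z
        obtain ⟨⟨x, s⟩, e⟩ := IsLocalization.surj (U.map (Ideal.Quotient.mk I)) z
        obtain ⟨u, hu⟩ := hunit s
        refine ⟨x * ↑u⁻¹, ?_⟩
        show algebraMap _ _ (x * ↑u⁻¹) = z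
        have e' : z * (algebraMap (Polynomial A ⧸ I) (Localization U ⧸ J) : Polynomial A ⧸ I →+* Localization U ⧸ J) (↑u : Polynomial A ⧸ I) =
            (algebraMap (Polynomial A ⧸ I) (Localization U ⧸ J) : Polynomial A ⧸ I →+* Localization U ⧸ J) x := by rw [hu]; exact e
        set w : (Localization U ⧸ J)ˣ :=
          Units.map ((algebraMap (Polynomial A ⧸ I) (Localization U ⧸ J) : Polynomial A ⧸ I →+* Localization U ⧸ J)).toMonoidHom u with hw
        calc (algebraMap (Polynomial A ⧸ I) (Localization U ⧸ J) : Polynomial A ⧸ I →+* Localization U ⧸ J) (x * (↑u⁻¹ : Polynomial A ⧸ I))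
            = (algebraMap (Polynomial A ⧸ I) (Localization U ⧸ J) : Polynomial A ⧸ I →+* Localization U ⧸ J) x *
              (algebraMap (Polynomial A ⧸ I) (Localization U ⧸ J) : Polynomial A ⧸ I →+* Localization U ⧸ J) (↑u⁻¹ : Polynomial A ⧸ I) :=
              map_mul _ _ _
          _ = z * ↑w * ↑w⁻¹ := by rw [← e']; rfl
          _ = z := Units.mul_inv_cancel_right z w
  have h13 : Function.Bijective φ ↔ ∀ f ∈ U, IsUnit
      (LinearMap.toMatrix (AdjoinRoot.powerBasis' hF).basis (AdjoinRoot.powerBasis' hF).basis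
        (LinearMap.mulLeft A (AdjoinRoot.mk F f))).det := by
    rw [key]
    exact forall₂_congr fun f hf =>
      isUnit_iff_isUnit_det_mulLeft (AdjoinRoot.powerBasis' hF).basis (AdjoinRoot.mk F f)
  have h12 : Function.Bijective φ ↔
      LinearIndependent A (fun i : Fin F.natDegree =>
        Ideal.Quotient.mk J (algebraMap (Polynomial A) (Localization U) (X ^ (i : ℕ))))
      ∧ Submodule.span A (Set.range fun i : Fin F.natDegree =>
        Ideal.Quotient.mk J (algebraMap (Polynomial A) (Localization U) (X ^ (i : ℕ)))) = ⊤ := by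
    exact bijective_iff_image_basis (AdjoinRoot.powerBasis' hF).basis ψ.toLinearMap
      _ (fun i => hbasis i)
  tfae_have 1 ↔ 3 := h13
  tfae_have 1 ↔ 2 := h12
  tfae_finish
end

section
/- Let A be a local commutative ring with residue field K, let U be a multiplicatively closed subset of A[X] containing 1, and let F ∈ A[X] be a monic polynomial of positive degree n. Assume that the K-vector space (A[X]_U/(F·A[X]_U)) ⊗_A K has a basis given by the residue classes of 1, X, …, X^{n-1}. Then the A-module A[X]_U/(F·A[X]_U) has a basis given by the residue classes of 1, X, …, X^{n-1}; in particular it is a finitely generated A-module. -/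
open Polynomial TensorProduct


set_option maxHeartbeats 1000000 in
theorem aux_basis_of_residue_basis {A : Type*} [CommRing A] [IsLocalRing A]
    (U : Submonoid (Polynomial A)) {F : Polynomial A} (hF : F.Monic) (hdeg : 0 < F.natDegree)
    (L : Type*) [CommRing L] [Algebra (Polynomial A) L] [Algebra A L]
    [IsScalarTower A (Polynomial A) L] [IsLocalization U L]
    (hli : LinearIndependent (IsLocalRing.ResidueField A)
          (fun i : Fin F.natDegree =>
            ((1 : IsLocalRing.ResidueField A) ⊗ₜ[A]
              (Ideal.Quotient.mk (Ideal.span {algebraMap (Polynomial A) L F})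
                (algebraMap (Polynomial A) L (X ^ (i : ℕ)))) :
              IsLocalRing.ResidueField A ⊗[A]
                (L ⧸ Ideal.span {algebraMap (Polynomial A) L F}))))
    (hsp : Submodule.span (IsLocalRing.ResidueField A)
            (Set.range fun i : Fin F.natDegree =>
              ((1 : IsLocalRing.ResidueField A) ⊗ₜ[A]
                (Ideal.Quotient.mk (Ideal.span {algebraMap (Polynomial A) L F})
                  (algebraMap (Polynomial A) L (X ^ (i : ℕ)))) :
                IsLocalRing.ResidueField A ⊗[A]
                  (L ⧸ Ideal.span {algebraMap (Polynomial A) L F})))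
            = ⊤) :
    (LinearIndependent A
        (fun i : Fin F.natDegree =>
          (Ideal.Quotient.mk (Ideal.span {algebraMap (Polynomial A) L F})
            (algebraMap (Polynomial A) L (X ^ (i : ℕ)))))
      ∧ Submodule.span A
          (Set.range fun i : Fin F.natDegree =>
            (Ideal.Quotient.mk (Ideal.span {algebraMap (Polynomial A) L F})
              (algebraMap (Polynomial A) L (X ^ (i : ℕ))))) = ⊤)
    ∧ Module.Finite A (L ⧸ Ideal.span {algebraMap (Polynomial A) L F}) := by
  classical
  have hle : (Ideal.span {F} : Ideal (Polynomial A)) ≤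
      (Ideal.span {algebraMap (Polynomial A) L F}).comap
        (IsScalarTower.toAlgHom A (Polynomial A) L) := by
    rw [Ideal.span_le, Set.singleton_subset_iff]
    exact Ideal.subset_span rfl
  let φ : AdjoinRoot F →ₐ[A] L ⧸ Ideal.span {algebraMap (Polynomial A) L F} :=
    Ideal.quotientMapₐ _ (IsScalarTower.toAlgHom A (Polynomial A) L) hle
  have hφmk : ∀ p : Polynomial A, φ (AdjoinRoot.mk F p) =
      Ideal.Quotient.mk (Ideal.span {algebraMap (Polynomial A) L F})
        (algebraMap (Polynomial A) L p) := fun p => rfl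
  let pb := AdjoinRoot.powerBasis' hF
  let b : Module.Basis (Fin F.natDegree) A (AdjoinRoot F) := pb.basis
  haveI : Module.Finite A (AdjoinRoot F) := Module.Finite.of_basis b
  have hbX : ∀ i : Fin F.natDegree, b i = AdjoinRoot.mk F (X ^ (i : ℕ)) := by
    intro i
    rw [show b i = pb.gen ^ (i : ℕ) from pb.basis_eq_pow i]
    simp [pb, map_pow]
  let ψ : IsLocalRing.ResidueField A ⊗[A] AdjoinRoot F →ₗ[IsLocalRing.ResidueField A]
      IsLocalRing.ResidueField A ⊗[A] (L ⧸ Ideal.span {algebraMap (Polynomial A) L F}) :=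
    φ.toLinearMap.baseChange _
  have hψtmul : ∀ (c : IsLocalRing.ResidueField A) (x : AdjoinRoot F),
      ψ (c ⊗ₜ x) = c ⊗ₜ φ x := fun c x => rfl
  have hψmul : ∀ (y : AdjoinRoot F) z,
      ψ ((1 ⊗ₜ[A] y) * z) = (1 ⊗ₜ[A] (φ y)) * ψ z := by
    intro y z
    induction z using TensorProduct.induction_on with
    | zero => simp
    | tmul c x =>
        rw [Algebra.TensorProduct.tmul_mul_tmul, hψtmul, hψtmul,
          Algebra.TensorProduct.tmul_mul_tmul, map_mul]
    | add x y hx hy => rw [mul_add, map_add, hx, hy, map_add, mul_add]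
  let bk : Module.Basis (Fin F.natDegree) (IsLocalRing.ResidueField A)
      (IsLocalRing.ResidueField A ⊗[A] AdjoinRoot F) :=
    b.baseChange (IsLocalRing.ResidueField A)
  have hbk : ∀ i, ψ (bk i) = (1 : IsLocalRing.ResidueField A) ⊗ₜ[A]
      (Ideal.Quotient.mk (Ideal.span {algebraMap (Polynomial A) L F})
        (algebraMap (Polynomial A) L (X ^ (i : ℕ)))) := by
    intro i
    rw [show bk i = 1 ⊗ₜ[A] b i from Module.Basis.baseChange_apply _ b i, hψtmul, hbX, hφmk]
  have hliψ : LinearIndependent (IsLocalRing.ResidueField A) (fun i => ψ (bk i)) := by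
    convert hli using 1
    funext i
    exact hbk i
  have hψinj : Function.Injective ψ := by
    rw [← LinearMap.ker_eq_bot, LinearMap.ker_eq_bot']
    intro x hx
    have hsum := bk.sum_repr x
    have h0 : ∑ i, bk.repr x i • ψ (bk i) = 0 := by
      simp_rw [← map_smul ψ, ← map_sum, hsum, hx]
    have hz : ∀ i, bk.repr x i = 0 := Fintype.linearIndependent_iff.mp hliψ _ h0
    rw [← hsum]
    simp [hz]
  have hψsurj : Function.Surjective ψ := by
    rw [← LinearMap.range_eq_top, ← top_le_iff, ← hsp, Submodule.span_le]
    rintro _ ⟨i, rfl⟩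
    exact ⟨bk i, hbk i⟩
  -- every element of U becomes a unit in AdjoinRoot F
  have key : ∀ u : U, IsUnit (AdjoinRoot.mk F (u : Polynomial A)) := by
    intro u
    have hw : IsUnit (Ideal.Quotient.mk (Ideal.span {algebraMap (Polynomial A) L F})
        (algebraMap (Polynomial A) L (u : Polynomial A))) :=
      (IsLocalization.map_units L u).map (Ideal.Quotient.mk _)
    have hw' : IsUnit ((1 : IsLocalRing.ResidueField A) ⊗ₜ[A]
        (Ideal.Quotient.mk (Ideal.span {algebraMap (Polynomial A) L F})
          (algebraMap (Polynomial A) L (u : Polynomial A))) :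
        IsLocalRing.ResidueField A ⊗[A]
          (L ⧸ Ideal.span {algebraMap (Polynomial A) L F})) :=
      hw.map (Algebra.TensorProduct.includeRight)
    have hsur2 : ∀ z, ∃ z',
        ((1 : IsLocalRing.ResidueField A) ⊗ₜ[A]
          AdjoinRoot.mk F (u : Polynomial A)) * z' = z := by
      intro z
      obtain ⟨z', hz'⟩ := hψsurj (↑hw'.unit⁻¹ * ψ z)
      refine ⟨z', hψinj ?_⟩
      rw [hψmul, hz', hφmk]
      exact hw'.unit.mul_inv_cancel_left (ψ z)
    have hrange : Function.Surjective
        ((TensorProduct.mk A (IsLocalRing.ResidueField A) (AdjoinRoot F) 1).comp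
          (LinearMap.mulLeft A (AdjoinRoot.mk F (u : Polynomial A)))) := by
      intro z
      obtain ⟨z', hz'⟩ := hsur2 z
      obtain ⟨x, hx⟩ := TensorProduct.mk_surjective A (AdjoinRoot F)
        (IsLocalRing.ResidueField A) Ideal.Quotient.mk_surjective z'
      refine ⟨x, ?_⟩
      rw [TensorProduct.mk_apply] at hx
      show (1 : IsLocalRing.ResidueField A) ⊗ₜ[A] (AdjoinRoot.mk F (u : Polynomial A) * x) = z
      rw [← hz', ← hx, Algebra.TensorProduct.tmul_mul_tmul, one_mul]
    have hmulsurj : Function.Surjective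
        (LinearMap.mulLeft A (AdjoinRoot.mk F (u : Polynomial A))) := by
      have htop := LinearMap.range_eq_top.mpr hrange
      rw [LinearMap.range_comp, IsLocalRing.map_tensorProduct_mk_eq_top] at htop
      exact LinearMap.range_eq_top.mp htop
    obtain ⟨y, hy⟩ := hmulsurj 1
    exact IsUnit.of_mul_eq_one y hy
  -- φ is surjective
  have hφsurj : Function.Surjective φ := by
    intro z
    obtain ⟨z0, rfl⟩ := Ideal.Quotient.mk_surjective z
    obtain ⟨⟨p, u⟩, hpu⟩ := IsLocalization.surj (M := U) z0
    obtain ⟨y, hy⟩ := (key u).exists_right_inv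
    obtain ⟨q, rfl⟩ := AdjoinRoot.mk_surjective y
    refine ⟨AdjoinRoot.mk F (p * q), ?_⟩
    rw [hφmk, Ideal.Quotient.eq]
    have h1 : (u : Polynomial A) * q - 1 ∈ (Ideal.span {F} : Ideal (Polynomial A)) := by
      rw [← Ideal.Quotient.eq_zero_iff_mem]
      show AdjoinRoot.mk F ((u : Polynomial A) * q - 1) = 0
      rw [map_sub, map_mul, map_one, hy, sub_self]
    obtain ⟨c, hc⟩ := Ideal.mem_span_singleton'.mp h1
    have h2 : algebraMap (Polynomial A) L ((u : Polynomial A) * q - 1) ∈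
        Ideal.span {algebraMap (Polynomial A) L F} :=
      Ideal.mem_span_singleton'.mpr ⟨algebraMap (Polynomial A) L c, by rw [← map_mul, hc]⟩
    have h3 : algebraMap (Polynomial A) L (p * q) - z0 =
        z0 * algebraMap (Polynomial A) L ((u : Polynomial A) * q - 1) := by
      rw [map_mul, map_sub, map_mul, map_one, ← hpu]
      ring
    rw [h3]
    exact Ideal.mul_mem_left _ z0 h2
  -- φ is injective
  have hφinj : Function.Injective φ := by
    rw [injective_iff_map_eq_zero]
    intro x hx
    obtain ⟨p, rfl⟩ := AdjoinRoot.mk_surjective x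
    rw [hφmk, Ideal.Quotient.eq_zero_iff_mem] at hx
    obtain ⟨c, hc⟩ := Ideal.mem_span_singleton'.mp hx
    obtain ⟨⟨q, u⟩, hqu⟩ := IsLocalization.surj (M := U) c
    have heq : algebraMap (Polynomial A) L (p * u) = algebraMap (Polynomial A) L (q * F) := by
      rw [map_mul, map_mul, ← hc, ← hqu]; ring
    obtain ⟨v, hv⟩ := (IsLocalization.eq_iff_exists U L).mp heq
    have h0 : AdjoinRoot.mk F p * AdjoinRoot.mk F ((v : Polynomial A) * u) = 0 := by
      rw [← map_mul]
      have h5 : p * ((v : Polynomial A) * (u : Polynomial A)) =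
          (v : Polynomial A) * (q * F) := by rw [← hv]; ring
      rw [h5, map_mul, map_mul, AdjoinRoot.mk_self, mul_zero, mul_zero]
    have hvu : IsUnit (AdjoinRoot.mk F ((v : Polynomial A) * (u : Polynomial A))) := by
      have := key (v * u)
      rwa [Submonoid.coe_mul] at this
    exact hvu.mul_left_eq_zero.mp h0
  have hfun : (fun i : Fin F.natDegree =>
      (Ideal.Quotient.mk (Ideal.span {algebraMap (Polynomial A) L F})
        (algebraMap (Polynomial A) L (X ^ (i : ℕ)))))
      = (⇑φ.toLinearMap ∘ ⇑b) := by
    funext i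
    show _ = φ (b i)
    rw [hbX, hφmk]
  refine ⟨⟨?_, ?_⟩, ?_⟩
  · rw [hfun]
    exact b.linearIndependent.map' φ.toLinearMap (LinearMap.ker_eq_bot.mpr hφinj)
  · have hmap : Submodule.map φ.toLinearMap ⊤ = ⊤ := by
      rw [Submodule.map_top, LinearMap.range_eq_top]
      exact hφsurj
    rw [← b.span_eq, Submodule.map_span, ← Set.range_comp] at hmap
    rw [hfun]
    exact hmap
  · exact Module.Finite.of_surjective φ.toLinearMap hφsurj

/-- Let `A` be a local ring with residue field `K`, `U ⊆ A[X]` multiplicatively closed and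
`F ∈ A[X]` monic of positive degree `n`.  If the residue classes of `1, X, …, X^{n-1}` form a
`K`-basis of `(A[X]_U/(F·A[X]_U)) ⊗_A K`, then the residue classes of `1, X, …, X^{n-1}` form
an `A`-basis of `A[X]_U/(F·A[X]_U)`; in particular the latter is a finitely generated
`A`-module. -/
theorem basis_of_residue_basis {A : Type*} [CommRing A] [IsLocalRing A]
    (U : Submonoid (Polynomial A)) {F : Polynomial A} (hF : F.Monic) (hdeg : 0 < F.natDegree)
    (hbasis :
      LinearIndependent (IsLocalRing.ResidueField A)
          (fun i : Fin F.natDegree =>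
            ((1 : IsLocalRing.ResidueField A) ⊗ₜ[A]
              (Ideal.Quotient.mk (Ideal.span {algebraMap (Polynomial A) (Localization U) F})
                (algebraMap (Polynomial A) (Localization U) (X ^ (i : ℕ)))) :
              IsLocalRing.ResidueField A ⊗[A]
                (Localization U ⧸ Ideal.span {algebraMap (Polynomial A) (Localization U) F})))
        ∧ Submodule.span (IsLocalRing.ResidueField A)
            (Set.range fun i : Fin F.natDegree =>
              ((1 : IsLocalRing.ResidueField A) ⊗ₜ[A]
                (Ideal.Quotient.mk (Ideal.span {algebraMap (Polynomial A) (Localization U) F})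
                  (algebraMap (Polynomial A) (Localization U) (X ^ (i : ℕ)))) :
                IsLocalRing.ResidueField A ⊗[A]
                  (Localization U ⧸ Ideal.span {algebraMap (Polynomial A) (Localization U) F})))
            = ⊤) :
    (LinearIndependent A
        (fun i : Fin F.natDegree =>
          (Ideal.Quotient.mk (Ideal.span {algebraMap (Polynomial A) (Localization U) F})
            (algebraMap (Polynomial A) (Localization U) (X ^ (i : ℕ)))))
      ∧ Submodule.span A
          (Set.range fun i : Fin F.natDegree =>
            (Ideal.Quotient.mk (Ideal.span {algebraMap (Polynomial A) (Localization U) F})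
              (algebraMap (Polynomial A) (Localization U) (X ^ (i : ℕ))))) = ⊤)
    ∧ Module.Finite A
        (Localization U ⧸ Ideal.span {algebraMap (Polynomial A) (Localization U) F}) :=
  aux_basis_of_residue_basis U hF hdeg (Localization U) hbasis.1 hbasis.2
end
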